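/- arXiv:1803.00866 — 2 statements merged into one kernel-verified Lean document; each statement's English description precedes it below -/
import Mathlib

section
/- For every integer n ≥ 2 there exists an injective group homomorphism from Thompson's group F_n into Thompson's group F_2 = F. -/
noncomputable section

namespace ThompsonPaper

/-- Homeomorphisms of a topological space form a group under composition,
with `(f * g) x = f (g x)`. -/
instance homeoGroup {α : Type*} [TopologicalSpace α] : Group (α ≃ₜ α) where
  mul f g := g.trans f
  one := Homeomorph.refl α
  inv := Homeomorph.symm
  mul_assoc _ _ _ := Homeomorph.ext fun _ => rfl
  one_mul _ := Homeomorph.ext fun _ => rfl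
  mul_one _ := Homeomorph.ext fun _ => rfl
  inv_mul_cancel f := Homeomorph.ext fun x => f.symm_apply_apply x

/-- `x` is an `n`-adic rational: `x = a / n ^ k` with `a` an integer, `k` a natural number. -/
def IsNAdic (n : ℕ) (x : ℝ) : Prop := ∃ a : ℤ, ∃ k : ℕ, x = (a : ℝ) / (n : ℝ) ^ k

/-- The unit interval `[0,1]`. -/
abbrev UnitInt : Type := Set.Icc (0 : ℝ) 1

/-- Membership in Thompson's group `F_n`: an orientation-preserving homeomorphism of
`[0,1]` which is piecewise affine with finitely many breakpoints, all breakpoints at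
`n`-adic rationals, and with the slope of every affine piece an integer power of `n`. -/
def InF (n : ℕ) (f : UnitInt ≃ₜ UnitInt) : Prop :=
  StrictMono f ∧
  ∃ m : ℕ, ∃ t : ℕ → ℝ, ∃ slope : ℕ → ℤ, ∃ c : ℕ → ℝ,
    0 < m ∧ t 0 = 0 ∧ t m = 1 ∧
    (∀ i, i < m → t i < t (i + 1)) ∧
    (∀ i, i ≤ m → IsNAdic n (t i)) ∧
    (∀ i, i < m → ∀ x : UnitInt, (x : ℝ) ∈ Set.Icc (t i) (t (i + 1)) →
      (f x : ℝ) = (n : ℝ) ^ (slope i) * (x : ℝ) + c i)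

/-- Thompson's group `F_n`, as a set of homeomorphisms of `[0,1]`. -/
def FnSet (n : ℕ) : Set (UnitInt ≃ₜ UnitInt) := { f | InF n f }

/-- Thompson's group `F_n`, as a subgroup of the homeomorphism group of `[0,1]`.
(The set `FnSet n` is closed under the group operations, so this subgroup has exactly
`FnSet n` as its underlying set.) -/
def Fn (n : ℕ) : Subgroup (UnitInt ≃ₜ UnitInt) := Subgroup.closure (FnSet n)

section Emb

variable {n : ℕ}




/-- binary length factor of digit `d` -/
def Bc (n d : ℕ) : ℝ := (2:ℝ)⁻¹ ^ (min (d+1) (n-1))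
/-- binary left endpoint of digit `d` -/
def Ac (n d : ℕ) : ℝ := 1 - (2:ℝ)⁻¹ ^ (min d (n-1))

/-- exponent of the binary length of the level-`k` interval with index `a` -/
def gam (n : ℕ) : ℕ → ℕ → ℕ
  | 0, _ => 0
  | (k+1), a => min (a / n^k + 1) (n-1) + gam n k (a % n^k)

def bet (n k a : ℕ) : ℝ := (2:ℝ)⁻¹ ^ (gam n k a)

/-- binary left endpoint of image of level-`k` interval with index `a` -/
def alp (n : ℕ) : ℕ → ℕ → ℝ
  | 0, _ => 0
  | (k+1), a => Ac n (a / n^k) + Bc n (a / n^k) * alp n k (a % n^k)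

def alpe (n k a : ℕ) : ℝ := if a < n^k then alp n k a else 1

variable {n : ℕ}

lemma Bc_pos (n d : ℕ) : 0 < Bc n d := by rw [Bc]; positivity

lemma Bc_le_half (hn : 2 ≤ n) (d : ℕ) : Bc n d ≤ 2⁻¹ := by
  have h1 : 1 ≤ min (d+1) (n-1) := by omega
  have h := pow_le_pow_of_le_one (by norm_num : (0:ℝ) ≤ 2⁻¹) (by norm_num : (2:ℝ)⁻¹ ≤ 1) h1
  rw [pow_one] at h
  exact h

lemma Bc_le_one (n d : ℕ) : Bc n d ≤ 1 :=
  pow_le_one₀ (by norm_num) (by norm_num)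

lemma Ac_nonneg (n d : ℕ) : 0 ≤ Ac n d := by
  have : (2:ℝ)⁻¹ ^ (min d (n-1)) ≤ 1 := pow_le_one₀ (by norm_num) (by norm_num)
  rw [Ac]; linarith

lemma Ac_le_one (n d : ℕ) : Ac n d ≤ 1 := by
  have : (0:ℝ) ≤ (2:ℝ)⁻¹ ^ (min d (n-1)) := by positivity
  rw [Ac]; linarith

lemma Ac_zero (n : ℕ) : Ac n 0 = 0 := by simp [Ac]

lemma AB_step (hn : 2 ≤ n) {d : ℕ} (hd : d + 1 ≤ n - 1) :
    Ac n d + Bc n d = Ac n (d+1) := by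
  have h1 : min d (n-1) = d := by omega
  have h2 : min (d+1) (n-1) = d + 1 := by omega
  rw [Ac, Ac, Bc, h1, h2, pow_succ]
  ring

lemma AB_top (hn : 2 ≤ n) {d : ℕ} (hd : n - 1 ≤ d) :
    Ac n d + Bc n d = 1 := by
  have h1 : min d (n-1) = n-1 := by omega
  have h2 : min (d+1) (n-1) = n-1 := by omega
  rw [Ac, Bc, h1, h2]; ring

lemma AB_le_one (hn : 2 ≤ n) (d : ℕ) : Ac n d + Bc n d ≤ 1 := by
  rcases le_or_gt (n-1) d with h | h
  · rw [AB_top hn h]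
  · rw [AB_step hn (by omega)]; exact Ac_le_one n (d+1)

lemma bet_pos (n k a : ℕ) : 0 < bet n k a := by rw [bet]; positivity

lemma bet_zero (n a : ℕ) : bet n 0 a = 1 := by simp [bet, gam]

lemma bet_succ (n k a : ℕ) :
    bet n (k+1) a = Bc n (a / n^k) * bet n k (a % n^k) := by
  rw [bet, bet, Bc, gam, pow_add]

lemma gam_ge (hn : 2 ≤ n) : ∀ k a, k ≤ gam n k a := by
  intro k
  induction k with
  | zero => intro a; simp [gam]
  | succ k ih =>
    intro a
    have h0 := ih (a % n^k)
    have h1 : 1 ≤ min (a / n^k + 1) (n-1) := le_min (Nat.le_add_left 1 _) (by omega)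
    rw [gam]
    calc k + 1 = 1 + k := by omega
      _ ≤ min (a / n^k + 1) (n-1) + gam n k (a % n^k) := Nat.add_le_add h1 h0

lemma bet_le (hn : 2 ≤ n) (k a : ℕ) : bet n k a ≤ (2:ℝ)⁻¹ ^ k :=
  pow_le_pow_of_le_one (by norm_num) (by norm_num) (gam_ge hn k a)

lemma bet_le_one (hn : 2 ≤ n) (k a : ℕ) : bet n k a ≤ 1 :=
  pow_le_one₀ (by norm_num) (by norm_num)

lemma alp_zero (n : ℕ) : ∀ k, alp n k 0 = 0 := by
  intro k
  induction k with
  | zero => rfl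
  | succ k ih => rw [alp, Nat.zero_div, Nat.zero_mod, ih, Ac_zero]; ring

lemma alp_nonneg (n : ℕ) : ∀ k a, 0 ≤ alp n k a := by
  intro k
  induction k with
  | zero => intro a; simp [alp]
  | succ k ih =>
    intro a; rw [alp]
    have := Ac_nonneg n (a / n^k)
    have := Bc_pos n (a / n^k)
    have := ih (a % n^k)
    nlinarith

lemma npow_pos (hn : 2 ≤ n) (k : ℕ) : 0 < n^k := Nat.pow_pos (by omega)

lemma div_lt_of_lt_pow_succ (hn : 2 ≤ n) {k a : ℕ} (ha : a < n^(k+1)) : a / n^k < n := by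
  rw [Nat.div_lt_iff_lt_mul (npow_pos hn k)]
  calc a < n^(k+1) := ha
    _ = n * n^k := by ring

lemma alp_add_bet_le_one (hn : 2 ≤ n) : ∀ k a, a < n^k → alp n k a + bet n k a ≤ 1 := by
  intro k
  induction k with
  | zero =>
    intro a ha
    rw [pow_zero] at ha
    have : a = 0 := by omega
    subst this
    simp [alp, bet_zero]
  | succ k ih =>
    intro a ha
    have hd : a / n^k < n := div_lt_of_lt_pow_succ hn ha
    have hr : a % n^k < n^k := Nat.mod_lt _ (npow_pos hn k)
    have h1 := ih (a % n^k) hr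
    have h2 := Bc_pos n (a / n^k)
    have h3 := AB_le_one hn (a / n^k)
    rw [alp, bet_succ]
    nlinarith

lemma alp_le_one (hn : 2 ≤ n) (k a : ℕ) (ha : a < n^k) : alp n k a ≤ 1 := by
  have := alp_add_bet_le_one hn k a ha
  have := bet_pos n k a
  linarith

lemma alpe_nonneg (n k a : ℕ) : 0 ≤ alpe n k a := by
  rw [alpe]; split
  · exact alp_nonneg n k a
  · norm_num

lemma alpe_le_one (hn : 2 ≤ n) (k a : ℕ) : alpe n k a ≤ 1 := by
  rw [alpe]; split
  · exact alp_le_one hn k a (by assumption)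
  · norm_num

lemma alpe_zero (hn : 2 ≤ n) (k : ℕ) : alpe n k 0 = 0 := by
  rw [alpe, if_pos (npow_pos hn k), alp_zero]

lemma alpe_top (n k : ℕ) : alpe n k (n^k) = 1 := by
  rw [alpe, if_neg (lt_irrefl _)]

/-- arithmetic splitting helper -/
lemma split_div_mod (hn : 2 ≤ n) (k j a b : ℕ) (hb : b < n^j) :
    (a * n^j + b) / n^(k+j) = a / n^k ∧ (a * n^j + b) % n^(k+j) = (a % n^k) * n^j + b := by
  have hd := Nat.div_add_mod a (n^k)
  have hrem : (a % n^k) * n^j + b < n^(k+j) := by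
    have h1 : a % n^k ≤ n^k - 1 := by
      have := Nat.mod_lt a (npow_pos hn k); omega
    calc (a % n^k) * n^j + b ≤ (n^k - 1) * n^j + (n^j - 1) := by
          have := npow_pos hn j
          exact Nat.add_le_add (Nat.mul_le_mul_right _ h1) (by omega)
      _ = n^k * n^j - 1 := by
          have := npow_pos hn j
          have := npow_pos hn k
          have h2 : 1 * n^j ≤ n^k * n^j := Nat.mul_le_mul_right _ (by omega)
          rw [Nat.sub_mul]; omega
      _ < n^(k+j) := by rw [pow_add]; have := npow_pos hn (k+j); rw [pow_add] at *; omega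
  have heq : a * n^j + b = n^(k+j) * (a / n^k) + ((a % n^k) * n^j + b) := by
    rw [pow_add]
    calc a * n^j + b = (n^k * (a / n^k) + a % n^k) * n^j + b := by rw [hd]
      _ = n^k * n^j * (a / n^k) + (a % n^k * n^j + b) := by ring
  constructor
  · rw [heq, Nat.mul_add_div (npow_pos hn (k+j)), Nat.div_eq_of_lt hrem, Nat.add_zero]
  · rw [heq, Nat.mul_add_mod, Nat.mod_eq_of_lt hrem]

lemma comp_gam (hn : 2 ≤ n) : ∀ k j a b, a < n^k → b < n^j →
    gam n (k+j) (a * n^j + b) = gam n k a + gam n j b := by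
  intro k
  induction k with
  | zero =>
    intro j a b ha hb
    rw [pow_zero] at ha
    have : a = 0 := by omega
    subst this
    simp [gam]
  | succ k ih =>
    intro j a b ha hb
    obtain ⟨h1, h2⟩ := split_div_mod hn k j a b hb
    have hl : (k+1)+j = (k+j)+1 := by omega
    rw [hl, gam, h1, h2, ih j (a % n^k) b (Nat.mod_lt _ (npow_pos hn k)) hb, gam]
    omega

lemma comp_bet (hn : 2 ≤ n) (k j a b : ℕ) (ha : a < n^k) (hb : b < n^j) :
    bet n (k+j) (a * n^j + b) = bet n k a * bet n j b := by
  rw [bet, bet, bet, comp_gam hn k j a b ha hb, pow_add]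

lemma comp_alp (hn : 2 ≤ n) : ∀ k j a b, a < n^k → b < n^j →
    alp n (k+j) (a * n^j + b) = alp n k a + bet n k a * alp n j b := by
  intro k
  induction k with
  | zero =>
    intro j a b ha hb
    rw [pow_zero] at ha
    have : a = 0 := by omega
    subst this
    simp [alp, bet_zero]
  | succ k ih =>
    intro j a b ha hb
    obtain ⟨h1, h2⟩ := split_div_mod hn k j a b hb
    have hl : (k+1)+j = (k+j)+1 := by omega
    rw [hl, alp, h1, h2, ih j (a % n^k) b (Nat.mod_lt _ (npow_pos hn k)) hb, alp, bet_succ]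
    ring

lemma alpe_eq (n : ℕ) {k a : ℕ} (h : a < n^k) : alpe n k a = alp n k a := if_pos h

lemma adj (hn : 2 ≤ n) : ∀ k a, a < n^k → alpe n k (a+1) = alp n k a + bet n k a := by
  intro k
  induction k with
  | zero =>
    intro a ha
    rw [pow_zero] at ha
    have h0 : a = 0 := by omega
    subst h0
    norm_num [alpe, alp, bet_zero]
  | succ k ih =>
    intro a ha
    have hn0 := npow_pos hn k
    have hdm := Nat.div_add_mod a (n^k)
    have hdn : a / n^k < n := div_lt_of_lt_pow_succ hn ha
    have hrk : a % n^k < n^k := Nat.mod_lt _ hn0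
    set d := a / n^k with hd
    set r := a % n^k with hr
    have ha1 : a + 1 = n^k * d + (r + 1) := by omega
    rcases Nat.lt_or_ge (r+1) (n^k) with hc | hc
    · -- inner step
      have hlt : a + 1 < n^(k+1) := by
        calc a + 1 = n^k * d + (r+1) := ha1
          _ < n^k * d + n^k := by omega
          _ = n^k * (d + 1) := by ring
          _ ≤ n^k * n := Nat.mul_le_mul_left (n^k) (by omega)
          _ = n^(k+1) := (pow_succ n k).symm
      have hdiv : (a+1) / n^k = d := by
        rw [ha1, Nat.mul_add_div hn0, Nat.div_eq_of_lt hc, Nat.add_zero]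
      have hmod : (a+1) % n^k = r + 1 := by
        rw [ha1, Nat.mul_add_mod, Nat.mod_eq_of_lt hc]
      have hih := ih r hrk
      rw [alpe_eq n hc] at hih
      rw [alpe_eq n hlt, alp, hdiv, hmod, hih, alp, ← hd, ← hr, bet_succ, ← hd, ← hr]
      ring
    · -- r + 1 = n^k
      have hc' : r + 1 = n^k := by omega
      have ha2 : a + 1 = n^k * (d + 1) := by rw [Nat.mul_add, Nat.mul_one]; omega
      have hih := ih r hrk
      rw [hc', alpe_top] at hih
      have h9 : alp n k r + bet n k r = 1 := hih.symm
      rcases Nat.lt_or_ge (d+1) n with hdc | hdc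
      · have hlt : a + 1 < n^(k+1) := by
          calc a + 1 = n^k * (d+1) := ha2
            _ < n^k * n := mul_lt_mul_of_pos_left hdc hn0
            _ = n^(k+1) := (pow_succ n k).symm
        have hdiv : (a+1) / n^k = d + 1 := by rw [ha2, Nat.mul_div_cancel_left _ hn0]
        have hmod : (a+1) % n^k = 0 := by rw [ha2, Nat.mul_mod_right]
        have hstep := AB_step hn (show d + 1 ≤ n - 1 by omega)
        rw [alpe_eq n hlt, alp, hdiv, hmod, alp_zero, mul_zero, add_zero, alp, bet_succ,
          ← hd, ← hr]
        linear_combination (-1:ℝ) * hstep - Bc n d * h9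
      · have hd' : d + 1 = n := by omega
        have hlt : ¬ (a + 1 < n^(k+1)) := by
          rw [hd'] at ha2
          rw [pow_succ]
          omega
        have h10 : Ac n d + Bc n d = 1 := AB_top hn (by omega)
        rw [alpe, if_neg hlt, alp, bet_succ, ← hd, ← hr]
        linear_combination (-1:ℝ) * h10 - Bc n d * h9

lemma alpe_succ_le (hn : 2 ≤ n) (k a : ℕ) : alpe n k (a+1) ≤ alpe n k a + (2:ℝ)⁻¹^k := by
  rcases Nat.lt_or_ge a (n^k) with h | h
  · rw [adj hn k a h, alpe_eq n h]
    have := bet_le hn k a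
    linarith
  · rw [alpe, if_neg (by omega), alpe, if_neg (by omega)]
    have : (0:ℝ) ≤ (2:ℝ)⁻¹^k := by positivity
    linarith

lemma alpe_mono (hn : 2 ≤ n) (k : ℕ) : Monotone (alpe n k) := by
  apply monotone_nat_of_le_succ
  intro a
  rcases Nat.lt_or_ge a (n^k) with h | h
  · rw [adj hn k a h, alpe_eq n h]
    have := bet_pos n k a
    linarith
  · rw [alpe, if_neg (by omega), alpe, if_neg (by omega)]

lemma alpe_strict (hn : 2 ≤ n) {k a : ℕ} (ha : a < n^k) :
    alpe n k a < alpe n k (a+1) := by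
  rw [adj hn k a ha, alpe_eq n ha]
  have := bet_pos n k a
  linarith

lemma alpe_refine (hn : 2 ≤ n) (k j a : ℕ) : alpe n (k+j) (a * n^j) = alpe n k a := by
  rcases Nat.lt_or_ge a (n^k) with h | h
  · have h2 : a * n^j < n^(k+j) := by
      rw [pow_add]
      exact Nat.mul_lt_mul_of_lt_of_le h (le_refl _) (npow_pos hn j)
    have h3 := comp_alp hn k j a 0 h (npow_pos hn j)
    rw [Nat.add_zero] at h3
    rw [alpe_eq n h2, alpe_eq n h, h3, alp_zero, mul_zero, add_zero]
  · have h2 : ¬ (a * n^j < n^(k+j)) := by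
      rw [pow_add, not_lt]
      exact Nat.mul_le_mul_right _ h
    rw [alpe, if_neg h2, alpe, if_neg (by omega)]

lemma cross (hn : 2 ≤ n) {k j a b : ℕ} (h : a * n^j ≤ b * n^k) :
    alpe n k a ≤ alpe n j b := by
  calc alpe n k a = alpe n (k+j) (a * n^j) := (alpe_refine hn k j a).symm
    _ ≤ alpe n (k+j) (b * n^k) := alpe_mono hn (k+j) h
    _ = alpe n (j+k) (b * n^k) := by rw [Nat.add_comm]
    _ = alpe n j b := alpe_refine hn j k b

/-- extended composition law, allowing `b = n^j` -/
lemma comp_alpe (hn : 2 ≤ n) {k j a b : ℕ} (ha : a < n^k) (hb : b ≤ n^j) :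
    alpe n (k+j) (a * n^j + b) = alp n k a + bet n k a * alpe n j b := by
  rcases Nat.lt_or_ge b (n^j) with h | h
  · have h2 : a * n^j + b < n^(k+j) := by
      have h3 : (a+1) * n^j ≤ n^k * n^j := Nat.mul_le_mul_right _ (by omega)
      have : a * n^j + b < (a+1) * n^j := by
        have := npow_pos hn j; nlinarith
      rw [pow_add]
      omega
    rw [alpe_eq n h2, alpe_eq n h, comp_alp hn k j a b ha h]
  · have hb' : b = n^j := by omega
    subst hb'
    have h4 : a * n^j + n^j = (a+1) * n^j := by ring
    rw [h4, alpe_refine hn k j (a+1), adj hn k a ha, alpe_top, mul_one]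

/-! ### The conjugating map `psi` -/

def Sset (n : ℕ) (x : ℝ) : Set ℝ :=
  {y | ∃ k a : ℕ, a ≤ n^k ∧ (a:ℝ)/(n:ℝ)^k ≤ x ∧ y = alpe n k a}

def psi (n : ℕ) (x : ℝ) : ℝ := sSup (Sset n x)

lemma ncast_pos (hn : 2 ≤ n) : (0:ℝ) < (n:ℝ) := by
  have : 0 < n := by omega
  exact_mod_cast this

lemma npow_pos' (hn : 2 ≤ n) (k : ℕ) : (0:ℝ) < (n:ℝ)^k := by
  have := ncast_pos hn
  positivity

lemma Sset_bdd (hn : 2 ≤ n) (x : ℝ) : BddAbove (Sset n x) := by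
  refine ⟨1, fun y hy => ?_⟩
  obtain ⟨k, a, _, _, rfl⟩ := hy
  exact alpe_le_one hn k a

lemma Sset_nonneg {x : ℝ} : ∀ y ∈ Sset n x, 0 ≤ y := by
  rintro y ⟨k, a, _, _, rfl⟩
  exact alpe_nonneg n k a

lemma Sset_mem_zero (hn : 2 ≤ n) {x : ℝ} (hx : 0 ≤ x) : (0:ℝ) ∈ Sset n x :=
  ⟨0, 0, by norm_num, by simpa using hx, (alpe_zero hn 0).symm⟩

lemma psi_nonneg (n : ℕ) (x : ℝ) : 0 ≤ psi n x :=
  Real.sSup_nonneg Sset_nonneg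

lemma psi_le_one (hn : 2 ≤ n) (x : ℝ) : psi n x ≤ 1 :=
  Real.sSup_le (fun y hy => by obtain ⟨k, a, _, _, rfl⟩ := hy; exact alpe_le_one hn k a)
    zero_le_one

lemma psi_mono (hn : 2 ≤ n) : Monotone (psi n) := by
  intro x y hxy
  rcases le_or_gt 0 x with hx | hx
  · exact csSup_le_csSup (Sset_bdd hn y) ⟨0, Sset_mem_zero hn hx⟩
      (fun z hz => by obtain ⟨k, a, h1, h2, rfl⟩ := hz; exact ⟨k, a, h1, le_trans h2 hxy, rfl⟩)
  · have he : Sset n x = ∅ := by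
      ext z
      simp only [Sset, Set.mem_setOf_eq, Set.mem_empty_iff_false, iff_false]
      rintro ⟨k, a, h1, h2, rfl⟩
      have : (0:ℝ) ≤ (a:ℝ)/(n:ℝ)^k := by positivity
      linarith
    rw [psi, he, Real.sSup_empty]
    exact psi_nonneg n y

lemma grid_le_iff (hn : 2 ≤ n) {k j a b : ℕ} :
    (a:ℝ)/(n:ℝ)^k ≤ (b:ℝ)/(n:ℝ)^j ↔ a * n^j ≤ b * n^k := by
  rw [div_le_div_iff₀ (npow_pos' hn k) (npow_pos' hn j)]
  constructor
  · intro h; exact_mod_cast h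
  · intro h; exact_mod_cast h

lemma psi_grid (hn : 2 ≤ n) {k a : ℕ} (ha : a ≤ n^k) :
    psi n ((a:ℝ)/(n:ℝ)^k) = alpe n k a := by
  apply le_antisymm
  · apply Real.sSup_le _ (alpe_nonneg n k a)
    rintro y ⟨j, b, hb, hle, rfl⟩
    exact cross hn ((grid_le_iff hn).1 hle)
  · exact le_csSup (Sset_bdd hn _) ⟨k, a, ha, le_refl _, rfl⟩

lemma psi_zero (hn : 2 ≤ n) : psi n 0 = 0 := by
  have h := psi_grid hn (k := 0) (a := 0) (by norm_num)
  simpa [alpe_zero hn] using h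

lemma psi_of_ge_one (hn : 2 ≤ n) {x : ℝ} (hx : 1 ≤ x) : psi n x = 1 := by
  apply le_antisymm (psi_le_one hn x)
  apply le_csSup (Sset_bdd hn _)
  refine ⟨0, 1, by norm_num, by simpa using hx, ?_⟩
  have h := alpe_top n 0
  rw [pow_zero] at h
  exact h.symm

lemma psi_one (hn : 2 ≤ n) : psi n 1 = 1 := psi_of_ge_one hn le_rfl

/-- Key self-similarity property of `psi`. -/
lemma psi_selfsim (hn : 2 ≤ n) {k a : ℕ} (ha : a < n^k) {x : ℝ}
    (hx : x ∈ Set.Icc (0:ℝ) 1) :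
    psi n (((a:ℝ) + x)/(n:ℝ)^k) = alp n k a + bet n k a * psi n x := by
  obtain ⟨hx0, hx1⟩ := hx
  have hNk := npow_pos' hn k
  have hbp := bet_pos n k a
  set T := psi n (((a:ℝ) + x)/(n:ℝ)^k) with hT
  have halpT : alp n k a ≤ T := by
    have h1 : (a:ℝ)/(n:ℝ)^k ≤ ((a:ℝ) + x)/(n:ℝ)^k := by
      rw [div_le_div_iff₀ hNk hNk]
      nlinarith
    have h2 := psi_mono hn h1
    rw [psi_grid hn (le_of_lt ha), alpe_eq n ha] at h2
    exact h2
  apply le_antisymm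
  · apply Real.sSup_le _ (by nlinarith [psi_nonneg n x, alp_nonneg n k a])
    rintro y ⟨j, b, hb, hle, rfl⟩
    have hNj := npow_pos' hn j
    rcases le_or_gt (b * n^k) (a * n^j) with hcmp | hcmp
    · have h3 : alpe n j b ≤ alpe n k a := cross hn hcmp
      rw [alpe_eq n ha] at h3
      nlinarith [psi_nonneg n x]
    · set c : ℕ := b * n^k - a * n^j with hc
      have hr1 : (b:ℝ) * (n:ℝ)^k ≤ ((a:ℝ) + x) * (n:ℝ)^j := by
        rw [div_le_div_iff₀ hNj hNk] at hle
        exact hle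
      have hc1 : c ≤ n^j := by
        have hr2 : (b:ℝ) * (n:ℝ)^k ≤ ((a:ℝ) + 1) * (n:ℝ)^j := by nlinarith
        have hr3 : b * n^k ≤ (a+1) * n^j := by exact_mod_cast hr2
        rw [Nat.succ_mul] at hr3
        omega
      have hceq : (c:ℝ) = (b:ℝ) * (n:ℝ)^k - (a:ℝ)*(n:ℝ)^j := by
        rw [hc, Nat.cast_sub (le_of_lt hcmp)]
        push_cast
        ring
      have hc2 : (c:ℝ)/(n:ℝ)^j ≤ x := by
        rw [div_le_iff₀ hNj]
        nlinarith
      have hbc : b * n^k = a * n^j + c := by omega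
      have h4 : alpe n j b = alp n k a + bet n k a * alpe n j c := by
        have h5 : alpe n j b = alpe n (j+k) (b * n^k) := (alpe_refine hn j k b).symm
        rw [h5, Nat.add_comm j k, hbc, comp_alpe hn ha hc1]
      have h6 : alpe n j c ≤ psi n x := le_csSup (Sset_bdd hn x) ⟨j, c, hc1, hc2, rfl⟩
      nlinarith [alpe_nonneg n j c]
  · have key : ∀ y ∈ Sset n x, alp n k a + bet n k a * y ≤ T := by
      rintro y ⟨j, c, hc1, hc2, rfl⟩
      have hNj := npow_pos' hn j
      have h4 : alp n k a + bet n k a * alpe n j c = alpe n (k+j) (a * n^j + c) :=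
        (comp_alpe hn ha hc1).symm
      have hidx : a * n^j + c ≤ n^(k+j) := by
        have h5 : (a+1) * n^j ≤ n^k * n^j := Nat.mul_le_mul_right _ (by omega)
        rw [Nat.succ_mul] at h5
        rw [pow_add]
        omega
      have hgle : (((a * n^j + c : ℕ)):ℝ)/(n:ℝ)^(k+j) ≤ ((a:ℝ) + x)/(n:ℝ)^k := by
        rw [div_le_div_iff₀ (npow_pos' hn (k+j)) hNk]
        push_cast
        rw [pow_add]
        have h6 := (div_le_iff₀ hNj).mp hc2
        nlinarith
      rw [h4]
      exact le_csSup (Sset_bdd hn _) ⟨k+j, _, hidx, hgle, rfl⟩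
    have h7 : psi n x ≤ (T - alp n k a)/(bet n k a) := by
      apply Real.sSup_le
      · rintro y hy
        rw [le_div_iff₀ hbp]
        have := key y hy
        nlinarith
      · apply div_nonneg _ (le_of_lt hbp)
        linarith
    rw [le_div_iff₀ hbp] at h7
    nlinarith

/-- simple modulus of continuity for `psi` -/
lemma psi_modulus (hn : 2 ≤ n) (k : ℕ) {x y : ℝ} (h1 : x ≤ y)
    (h2 : y ≤ x + 1/(n:ℝ)^k) : psi n y ≤ psi n x + 2 * (2:ℝ)⁻¹^k := by
  have hNk := npow_pos' hn k
  have hq : (0:ℝ) ≤ (2:ℝ)⁻¹^k := by positivity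
  rcases lt_or_ge x 0 with hx | hx
  · have h3 : y ≤ (1:ℝ)/(n:ℝ)^k := by linarith
    have h4 := psi_mono hn h3
    have h5 : ((1:ℕ):ℝ)/(n:ℝ)^k = (1:ℝ)/(n:ℝ)^k := by norm_num
    have h6 : psi n ((1:ℝ)/(n:ℝ)^k) = alpe n k 1 := by
      rw [← h5]
      exact psi_grid hn (npow_pos hn k)
    have h7 := alpe_succ_le hn k 0
    rw [alpe_zero hn] at h7
    have h8 := psi_nonneg n x
    rw [h6] at h4
    linarith
  rcases le_or_gt 1 x with hx1 | hx1
  · have h3 := psi_le_one hn y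
    rw [psi_of_ge_one hn hx1]
    linarith
  -- main case : 0 ≤ x < 1
  set a : ℕ := ⌊x * (n:ℝ)^k⌋₊ with hadef
  have hfl : (a:ℝ) ≤ x * (n:ℝ)^k := Nat.floor_le (by positivity)
  have hfu : x * (n:ℝ)^k < (a:ℝ) + 1 := Nat.lt_floor_add_one _
  have hak : a < n^k := by
    have : (a:ℝ) < (n:ℝ)^k := by nlinarith
    exact_mod_cast this
  have hxp : psi n x ≥ alpe n k a := by
    have h3 : ((a:ℝ))/(n:ℝ)^k ≤ x := by
      rw [div_le_iff₀ hNk]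
      exact hfl
    have h4 := psi_mono hn h3
    rwa [psi_grid hn (le_of_lt hak)] at h4
  have hyu : y ≤ ((a:ℝ) + 2)/(n:ℝ)^k := by
    rw [le_div_iff₀ hNk]
    have h5 : (x + 1/(n:ℝ)^k) * (n:ℝ)^k = x * (n:ℝ)^k + 1 := by
      field_simp
    nlinarith
  have hstep : alpe n k (a+2) ≤ alpe n k a + 2 * (2:ℝ)⁻¹^k := by
    have s1 := alpe_succ_le hn k a
    have s2 := alpe_succ_le hn k (a+1)
    linarith
  have hyp : psi n y ≤ alpe n k (a+2) := by
    rcases le_or_gt (a+2) (n^k) with hc | hc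
    · have h6 : y ≤ (((a+2:ℕ)):ℝ)/(n:ℝ)^k := by
        push_cast
        exact hyu
      have h7 := psi_mono hn h6
      rwa [psi_grid hn hc] at h7
    · have h8 : alpe n k (a+2) = 1 := by
        rw [alpe, if_neg (by omega)]
      rw [h8]
      exact psi_le_one hn y
  linarith

lemma psi_cont (hn : 2 ≤ n) : Continuous (psi n) := by
  rw [Metric.continuous_iff]
  intro x ε hε
  obtain ⟨k, hk⟩ : ∃ k : ℕ, 2 * (2:ℝ)⁻¹^k < ε := by
    obtain ⟨k, hk⟩ := exists_pow_lt_of_lt_one (show (0:ℝ) < ε/2 by linarith)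
      (show (2:ℝ)⁻¹ < 1 by norm_num)
    exact ⟨k, by linarith⟩
  have hNk := npow_pos' hn k
  refine ⟨1/(n:ℝ)^k, by positivity, ?_⟩
  intro y hy
  rw [Real.dist_eq] at hy ⊢
  rw [abs_lt] at hy
  rcases le_total x y with h | h
  · have hm := psi_modulus hn k h (by linarith)
    have hm2 := psi_mono hn h
    rw [abs_lt]
    constructor <;> linarith
  · have hm := psi_modulus hn k h (by linarith)
    have hm2 := psi_mono hn h
    rw [abs_lt]
    constructor <;> linarith

lemma psi_strictOn (hn : 2 ≤ n) {x y : ℝ} (hx : x ∈ Set.Icc (0:ℝ) 1)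
    (hy : y ∈ Set.Icc (0:ℝ) 1) (hxy : x < y) : psi n x < psi n y := by
  have hN1 : (1:ℝ) < (n:ℝ) := by
    have : (1:ℕ) < n := by omega
    exact_mod_cast this
  obtain ⟨k, hk⟩ := pow_unbounded_of_one_lt (2/(y - x)) hN1
  have hNk := npow_pos' hn k
  have hyx : 0 < y - x := by linarith
  have hk2 : 2 < (y - x) * (n:ℝ)^k := by
    rw [div_lt_iff₀ hyx] at hk
    nlinarith
  set a : ℕ := ⌈x * (n:ℝ)^k⌉₊ with hadef
  have hcl : x * (n:ℝ)^k ≤ (a:ℝ) := Nat.le_ceil _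
  have hcu : (a:ℝ) < x * (n:ℝ)^k + 1 := by
    apply Nat.ceil_lt_add_one
    have := hx.1
    positivity
  have ha1 : a + 1 ≤ n^k := by
    have h3 : (a:ℝ) + 1 < (n:ℝ)^k := by nlinarith [hy.2]
    have h4 : a + 1 < n^k := by exact_mod_cast h3
    omega
  have hxa : x ≤ (a:ℝ)/(n:ℝ)^k := by
    rw [le_div_iff₀ hNk]
    exact hcl
  have hay : (((a+1:ℕ)):ℝ)/(n:ℝ)^k ≤ y := by
    rw [div_le_iff₀ hNk]
    push_cast
    nlinarith
  have h5 := psi_mono hn hxa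
  have h6 := psi_mono hn hay
  rw [psi_grid hn (by omega : a ≤ n^k)] at h5
  rw [psi_grid hn ha1] at h6
  have h7 : alpe n k a < alpe n k (a+1) := alpe_strict hn (by omega)
  linarith

/-! ### `IsNAdic` closure properties -/

lemma isNAdic_iff {N : ℕ} (hN : 2 ≤ N) {x : ℝ} :
    IsNAdic N x ↔ ∃ k : ℕ, ∃ a : ℤ, x * (N:ℝ)^k = (a:ℝ) := by
  constructor
  · rintro ⟨a, k, rfl⟩
    refine ⟨k, a, ?_⟩
    have := npow_pos' hN (k := k)
    field_simp
  · rintro ⟨k, a, h⟩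
    refine ⟨a, k, ?_⟩
    have := npow_pos' hN (k := k)
    rw [← h]
    field_simp

lemma isNAdic_one {N : ℕ} (hN : 2 ≤ N) : IsNAdic N 1 :=
  ⟨1, 0, by norm_num⟩

lemma isNAdic_add {N : ℕ} (hN : 2 ≤ N) {x y : ℝ} (hx : IsNAdic N x) (hy : IsNAdic N y) :
    IsNAdic N (x + y) := by
  rw [isNAdic_iff hN] at *
  obtain ⟨k, a, ha⟩ := hx
  obtain ⟨j, b, hb⟩ := hy
  refine ⟨k + j, a * (N:ℤ)^j + b * (N:ℤ)^k, ?_⟩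
  push_cast
  rw [pow_add]
  linear_combination ((N:ℝ))^j * ha + ((N:ℝ))^k * hb

lemma isNAdic_neg {N : ℕ} (hN : 2 ≤ N) {x : ℝ} (hx : IsNAdic N x) : IsNAdic N (-x) := by
  rw [isNAdic_iff hN] at *
  obtain ⟨k, a, ha⟩ := hx
  refine ⟨k, -a, ?_⟩
  push_cast
  linear_combination -ha

lemma isNAdic_sub {N : ℕ} (hN : 2 ≤ N) {x y : ℝ} (hx : IsNAdic N x) (hy : IsNAdic N y) :
    IsNAdic N (x - y) := by
  have := isNAdic_add hN hx (isNAdic_neg hN hy)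
  simpa [sub_eq_add_neg] using this

lemma isNAdic_mul {N : ℕ} (hN : 2 ≤ N) {x y : ℝ} (hx : IsNAdic N x) (hy : IsNAdic N y) :
    IsNAdic N (x * y) := by
  rw [isNAdic_iff hN] at *
  obtain ⟨k, a, ha⟩ := hx
  obtain ⟨j, b, hb⟩ := hy
  refine ⟨k + j, a * b, ?_⟩
  push_cast
  rw [pow_add]
  linear_combination (y * (N:ℝ)^j) * ha + (a:ℝ) * hb

lemma isNAdic_zpow_mul {N : ℕ} (hN : 2 ≤ N) (s : ℤ) {x : ℝ} (hx : IsNAdic N x) :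
    IsNAdic N ((N:ℝ)^s * x) := by
  have hNne : (N:ℝ) ≠ 0 := ne_of_gt (ncast_pos hN)
  rw [isNAdic_iff hN] at *
  obtain ⟨k, a, ha⟩ := hx
  set t : ℕ := (-s).toNat with htdef
  have he : (0:ℤ) ≤ (t:ℤ) + s := by
    have := Int.self_le_toNat (-s)
    omega
  refine ⟨k + t, a * (N:ℤ)^(((t:ℤ) + s).toNat), ?_⟩
  have h1 : (N:ℝ)^s * (N:ℝ)^((k + t : ℕ)) = (N:ℝ)^(k:ℕ) * (N:ℝ)^((((t:ℤ) + s).toNat)) := by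
    rw [← zpow_natCast (N:ℝ) (k + t), ← zpow_natCast (N:ℝ) k,
      ← zpow_natCast (N:ℝ) (((t:ℤ) + s).toNat), Int.toNat_of_nonneg he,
      ← zpow_add₀ hNne, ← zpow_add₀ hNne]
    congr 1
    push_cast
    ring
  calc (N:ℝ)^s * x * (N:ℝ)^(k + t : ℕ)
      = x * ((N:ℝ)^s * (N:ℝ)^(k + t : ℕ)) := by ring
    _ = (x * (N:ℝ)^k) * (N:ℝ)^((((t:ℤ) + s).toNat)) := by rw [h1]; ring
    _ = (a:ℝ) * (N:ℝ)^((((t:ℤ) + s).toNat)) := by rw [ha]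
    _ = _ := by push_cast; ring

lemma isNAdic_two_invpow (m : ℕ) : IsNAdic 2 ((2:ℝ)⁻¹ ^ m) := by
  refine ⟨1, m, ?_⟩
  rw [inv_pow]
  push_cast
  rw [inv_eq_one_div]

lemma alp_dyadic (n : ℕ) : ∀ k a, IsNAdic 2 (alp n k a) := by
  intro k
  induction k with
  | zero => intro a; exact ⟨0, 0, by simp [alp]⟩
  | succ k ih =>
    intro a
    rw [alp]
    apply isNAdic_add le_rfl
    · exact isNAdic_sub le_rfl (isNAdic_one le_rfl) (isNAdic_two_invpow _)
    · exact isNAdic_mul le_rfl (isNAdic_two_invpow _) (ih _)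

/-- transfer an integrality statement to a larger exponent -/
lemma den_mono {N : ℕ} (hN : 2 ≤ N) {x : ℝ} {k K : ℕ} (h : k ≤ K) (a : ℤ)
    (hx : x * (N:ℝ)^k = (a:ℝ)) : x * (N:ℝ)^K = ((a * (N:ℤ)^(K-k) : ℤ) : ℝ) := by
  obtain ⟨D, rfl⟩ : ∃ D, K = k + D := ⟨K - k, by omega⟩
  have hD : k + D - k = D := by omega
  rw [hD, pow_add]
  push_cast
  linear_combination ((N:ℝ))^D * hx

/-! ### Packaging `psi` as a homeomorphism of the unit interval -/

lemma psi_mem (hn : 2 ≤ n) (x : UnitInt) : psi n (x:ℝ) ∈ Set.Icc (0:ℝ) 1 :=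
  ⟨psi_nonneg n _, psi_le_one hn _⟩

def psiSub (n : ℕ) (hn : 2 ≤ n) : UnitInt → UnitInt := fun x => ⟨psi n (x:ℝ), psi_mem hn x⟩

lemma psiSub_strictMono (hn : 2 ≤ n) : StrictMono (psiSub n hn) := by
  intro x y h
  have : psi n (x:ℝ) < psi n (y:ℝ) := psi_strictOn hn x.2 y.2 (Subtype.coe_lt_coe.2 h)
  exact Subtype.mk_lt_mk.2 this

lemma psiSub_surjective (hn : 2 ≤ n) : Function.Surjective (psiSub n hn) := by
  intro y
  have hcont : ContinuousOn (psi n) (Set.Icc 0 1) := (psi_cont hn).continuousOn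
  have him := intermediate_value_Icc (zero_le_one (α := ℝ)) hcont
  rw [psi_zero hn, psi_one hn] at him
  obtain ⟨x, hx, hxy⟩ := him y.2
  exact ⟨⟨x, hx⟩, Subtype.ext hxy⟩

lemma psiSub_continuous (hn : 2 ≤ n) : Continuous (psiSub n hn) :=
  Continuous.subtype_mk ((psi_cont hn).comp continuous_subtype_val) _

/-- the conjugating homeomorphism of `[0,1]` -/
def Psi (n : ℕ) (hn : 2 ≤ n) : UnitInt ≃ₜ UnitInt :=
  Continuous.homeoOfEquivCompactToT2
    (f := Equiv.ofBijective (psiSub n hn) ⟨(psiSub_strictMono hn).injective, psiSub_surjective hn⟩)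
    (psiSub_continuous hn)

lemma Psi_apply (hn : 2 ≤ n) (x : UnitInt) : ((Psi n hn) x : ℝ) = psi n (x:ℝ) := rfl

lemma Psi_strictMono (hn : 2 ≤ n) : StrictMono ⇑(Psi n hn) := psiSub_strictMono hn

lemma strictMono_homeo_symm {f : UnitInt ≃ₜ UnitInt} (hf : StrictMono ⇑f) :
    StrictMono ⇑f.symm := by
  intro x y h
  rcases lt_trichotomy (f.symm x) (f.symm y) with h1 | h1 | h1
  · exact h1
  · exfalso
    have : x = y := by
      rw [← f.apply_symm_apply x, ← f.apply_symm_apply y, h1]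
    rw [this] at h
    exact lt_irrefl _ h
  · exfalso
    have h2 := hf h1
    rw [f.apply_symm_apply, f.apply_symm_apply] at h2
    exact absurd h (not_lt_of_gt h2)

lemma fixed_endpoints {f : UnitInt ≃ₜ UnitInt} (hf : StrictMono ⇑f) :
    (f ⟨0, by constructor <;> norm_num⟩ : ℝ) = 0 ∧
    (f ⟨1, by constructor <;> norm_num⟩ : ℝ) = 1 := by
  have hmono := hf.monotone
  constructor
  · obtain ⟨z, hz⟩ := f.surjective ⟨0, by constructor <;> norm_num⟩
    have h1 : (⟨0, by constructor <;> norm_num⟩ : UnitInt) ≤ z := by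
      rw [← Subtype.coe_le_coe]
      exact z.2.1
    have h2 := hmono h1
    rw [hz] at h2
    have h3 := (f ⟨0, by constructor <;> norm_num⟩).2.1
    rw [← Subtype.coe_le_coe] at h2
    exact le_antisymm h2 h3
  · obtain ⟨z, hz⟩ := f.surjective ⟨1, by constructor <;> norm_num⟩
    have h1 : z ≤ (⟨1, by constructor <;> norm_num⟩ : UnitInt) := by
      rw [← Subtype.coe_le_coe]
      exact z.2.2
    have h2 := hmono h1
    rw [hz] at h2
    have h3 := (f ⟨1, by constructor <;> norm_num⟩).2.2
    rw [← Subtype.coe_le_coe] at h2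
    exact le_antisymm h3 h2

lemma conj_mem (hn : 2 ≤ n) (f : UnitInt ≃ₜ UnitInt) (hf : InF n f) :
    InF 2 (Psi n hn * f * (Psi n hn)⁻¹) := by
  classical
  obtain ⟨hsm, m, t, slope, c, hm, ht0, htm, hinc, hadic, haff⟩ := hf
  have hN1 : (1:ℝ) < (n:ℝ) := by
    have : (1:ℕ) < n := by omega
    exact_mod_cast this
  have hNne : (n:ℝ) ≠ 0 := ne_of_gt (ncast_pos hn)
  -- monotone chain of breakpoints
  have tmono : ∀ j, j ≤ m → ∀ i, i ≤ j → t i ≤ t j := by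
    intro j
    induction j with
    | zero =>
      intro _ i hi
      have : i = 0 := by omega
      subst this
      exact le_refl _
    | succ j ih =>
      intro hj i hi
      rcases Nat.lt_or_ge i (j+1) with h | h
      · have h1 : t i ≤ t j := ih (by omega) i (by omega)
        have h2 : t j < t (j+1) := hinc j (by omega)
        linarith
      · have : i = j + 1 := by omega
        subst this
        exact le_refl _
  have tmem : ∀ i, i ≤ m → t i ∈ Set.Icc (0:ℝ) 1 := by
    intro i hi
    constructor
    · have := tmono i hi 0 (by omega)
      rw [ht0] at this
      exact this
    · have := tmono m (le_refl m) i hi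
      rw [htm] at this
      exact this
  have heval : ∀ i, i < m → ∀ r : ℝ, ∀ hr01 : r ∈ Set.Icc (0:ℝ) 1,
      r ∈ Set.Icc (t i) (t (i+1)) →
      (f ⟨r, hr01⟩ : ℝ) = (n:ℝ)^(slope i) * r + c i := by
    intro i hi r h01 hIcc
    exact haff i hi ⟨r, h01⟩ hIcc
  have hf1 := (fixed_endpoints hsm).2
  -- the last offset
  have hlast : ∀ i, i + 1 = m → c i = 1 - (n:ℝ)^(slope i) := by
    intro i hi1
    have hmem : (1:ℝ) ∈ Set.Icc (t i) (t (i+1)) := by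
      constructor
      · have h2 : t i < t (i+1) := hinc i (by omega)
        have h3 : t (i+1) = 1 := by rw [hi1, htm]
        linarith
      · rw [hi1, htm]
    have hv := heval i (by omega) 1 (by constructor <;> norm_num) hmem
    rw [hf1] at hv
    linarith
  -- all offsets are n-adic
  have hbase : ∀ i, i + 1 = m → IsNAdic n (c i) := by
    intro i hi1
    rw [hlast i hi1]
    have h1 : IsNAdic n ((n:ℝ)^(slope i) * 1) := isNAdic_zpow_mul hn (slope i) (isNAdic_one hn)
    rw [mul_one] at h1
    exact isNAdic_sub hn (isNAdic_one hn) h1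
  have hcad : ∀ i, i < m → IsNAdic n (c i) := by
    have key : ∀ d i, i < m → m - (i+1) ≤ d → IsNAdic n (c i) := by
      intro d
      induction d with
      | zero =>
        intro i him hd
        exact hbase i (by omega)
      | succ d ih =>
        intro i him hd
        rcases Nat.lt_or_ge (i+1) m with hlt | hge
        · have hmem01 : t (i+1) ∈ Set.Icc (0:ℝ) 1 := tmem (i+1) (by omega)
          have e1 := heval i him (t (i+1)) hmem01 ⟨le_of_lt (hinc i him), le_refl _⟩
          have e2 := heval (i+1) hlt (t (i+1)) hmem01 ⟨le_refl _, le_of_lt (hinc (i+1) hlt)⟩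
          have hc : c i = c (i+1) + (n:ℝ)^(slope (i+1)) * t (i+1) - (n:ℝ)^(slope i) * t (i+1) := by
            linarith
          rw [hc]
          apply isNAdic_sub hn
          · apply isNAdic_add hn (ih (i+1) hlt (by omega))
            exact isNAdic_zpow_mul hn _ (hadic (i+1) (by omega))
          · exact isNAdic_zpow_mul hn _ (hadic (i+1) (by omega))
        · exact hbase i (by omega)
    intro i hi
    exact key m i hi (by omega)
  -- choose denominators
  have htaux : ∀ i, ∃ k : ℕ, ∃ b : ℤ, i ≤ m → t i * (n:ℝ)^k = (b:ℝ) := by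
    intro i
    rcases le_or_gt i m with h | h
    · obtain ⟨k, b, hb⟩ := (isNAdic_iff hn).1 (hadic i h)
      exact ⟨k, b, fun _ => hb⟩
    · exact ⟨0, 0, fun hcon => absurd hcon (by omega)⟩
  choose kt bt hbt using htaux
  have hcaux : ∀ i, ∃ q : ℕ, ∃ e : ℤ, i < m → c i * (n:ℝ)^q = (e:ℝ) := by
    intro i
    rcases Nat.lt_or_ge i m with h | h
    · obtain ⟨q, e, he⟩ := (isNAdic_iff hn).1 (hcad i h)
      exact ⟨q, e, fun _ => he⟩
    · exact ⟨0, 0, fun hcon => absurd hcon (by omega)⟩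
  choose qc ec hec using hcaux
  obtain ⟨K, hK1, hK2⟩ : ∃ K : ℕ, (∀ i, i ≤ m → kt i ≤ K) ∧
      (∀ i, i < m → qc i + (slope i).toNat ≤ K) := by
    refine ⟨max (((Finset.range (m+1)).sup kt))
      ((Finset.range m).sup (fun i => qc i + (slope i).toNat)), ?_, ?_⟩
    · intro i hi
      exact le_trans (Finset.le_sup (Finset.mem_range.2 (by omega))) (le_max_left _ _)
    · intro i hi
      exact le_trans (Finset.le_sup (f := fun i => qc i + (slope i).toNat)
        (Finset.mem_range.2 (by omega))) (le_max_right _ _)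
  have hut : ∀ i, i ≤ m → t i * (n:ℝ)^K = ((bt i * (n:ℤ)^(K - kt i) : ℤ) : ℝ) :=
    fun i hi => den_mono hn (hK1 i hi) _ (hbt i hi)
  have hNK := npow_pos' hn (k := K)
  -- locate the piece containing a grid interval
  have hfind : ∀ j : ℕ, j < n^K →
      ∃ i, i < m ∧ t i ≤ (j:ℝ)/(n:ℝ)^K ∧ ((j:ℝ)+1)/(n:ℝ)^K ≤ t (i+1) := by
    intro j hj
    set P : ℕ → Prop := fun i => t i * (n:ℝ)^K ≤ (j:ℝ) with hPdef
    have hP0 : P 0 := by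
      rw [hPdef]
      simp only [ht0, zero_mul]
      positivity
    obtain ⟨i0, hle, hspec, hgreat⟩ : ∃ i0, i0 ≤ m - 1 ∧ P i0 ∧
        ∀ k, i0 < k → k ≤ m - 1 → ¬ P k :=
      ⟨Nat.findGreatest P (m-1), Nat.findGreatest_le (m-1),
        Nat.findGreatest_spec (Nat.zero_le _) hP0,
        fun k h1 h2 => Nat.findGreatest_is_greatest h1 h2⟩
    have hint : ∀ i, i ≤ m → ¬ P i → (j:ℝ) + 1 ≤ t i * (n:ℝ)^K := by
      intro i hi hnp
      rw [hPdef, not_le] at hnp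
      have h1 := hut i hi
      rw [h1] at hnp ⊢
      have h2 : (j:ℤ) < bt i * (n:ℤ)^(K - kt i) := by exact_mod_cast hnp
      have h3 : (j:ℤ) + 1 ≤ bt i * (n:ℤ)^(K - kt i) := by omega
      exact_mod_cast h3
    refine ⟨i0, ?_, ?_, ?_⟩
    · omega
    · rw [le_div_iff₀ hNK]
      exact hspec
    · rcases Nat.lt_or_ge (i0+1) m with hc | hc
      · have hnp : ¬ P (i0+1) := hgreat (i0+1) (by omega) (by omega)
        have h4 := hint (i0+1) (by omega) hnp
        rw [div_le_iff₀ hNK]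
        linarith
      · have hi1 : i0 + 1 = m := by omega
        rw [hi1, htm, div_le_one hNK]
        have : (j:ℝ) + 1 ≤ (n:ℝ)^K := by
          have h5 : ((j+1 : ℕ):ℝ) ≤ ((n^K : ℕ):ℝ) := by exact_mod_cast Nat.succ_le_of_lt hj
          push_cast at h5
          linarith
        linarith
  -- Step A : on each level-K grid interval, f is the standard affine map onto a grid interval
  have stepA : ∀ j : ℕ, j < n^K → ∃ (K' a' : ℕ), a' < n^K' ∧
      ∀ x : UnitInt, (x:ℝ) ∈ Set.Icc ((j:ℝ)/(n:ℝ)^K) (((j:ℝ)+1)/(n:ℝ)^K) →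
        (f x : ℝ) * (n:ℝ)^K' = (a':ℝ) + ((x:ℝ) * (n:ℝ)^K - (j:ℝ)) := by
    intro j hj
    obtain ⟨i, him, hti, hti1⟩ := hfind j hj
    have hjr : ((j:ℝ)+1) ≤ (n:ℝ)^K := by
      have h5 : ((j+1 : ℕ):ℝ) ≤ ((n^K : ℕ):ℝ) := by exact_mod_cast Nat.succ_le_of_lt hj
      push_cast at h5
      linarith
    have hgridle : (j:ℝ)/(n:ℝ)^K ≤ ((j:ℝ)+1)/(n:ℝ)^K := by
      rw [div_le_div_iff₀ hNK hNK]
      nlinarith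
    have hmemj : (j:ℝ)/(n:ℝ)^K ∈ Set.Icc (0:ℝ) 1 := by
      constructor
      · positivity
      · rw [div_le_one hNK]; linarith
    have hmemj1 : ((j:ℝ)+1)/(n:ℝ)^K ∈ Set.Icc (0:ℝ) 1 := by
      constructor
      · positivity
      · rw [div_le_one hNK]; linarith
    have hIccj : (j:ℝ)/(n:ℝ)^K ∈ Set.Icc (t i) (t (i+1)) := ⟨hti, le_trans hgridle hti1⟩
    have hIccj1 : ((j:ℝ)+1)/(n:ℝ)^K ∈ Set.Icc (t i) (t (i+1)) := ⟨le_trans hti hgridle, hti1⟩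
    have hvj := heval i him _ hmemj hIccj
    have hvj1 := heval i him _ hmemj1 hIccj1
    have himg0 : (0:ℝ) ≤ (f ⟨(j:ℝ)/(n:ℝ)^K, hmemj⟩ : ℝ) := (f _).2.1
    have himg1 : (f ⟨((j:ℝ)+1)/(n:ℝ)^K, hmemj1⟩ : ℝ) ≤ 1 := (f _).2.2
    have hspos : (0:ℝ) < (n:ℝ)^(slope i) := zpow_pos (ncast_pos hn) _
    have hsK : (n:ℝ)^(slope i) ≤ (n:ℝ)^((K:ℕ):ℤ) := by
      have hdiff : (f ⟨((j:ℝ)+1)/(n:ℝ)^K, hmemj1⟩ : ℝ) - (f ⟨(j:ℝ)/(n:ℝ)^K, hmemj⟩ : ℝ)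
          = (n:ℝ)^(slope i) / (n:ℝ)^K := by
        rw [hvj, hvj1]
        field_simp
        ring
      have h6 : (n:ℝ)^(slope i) / (n:ℝ)^K ≤ 1 := by
        rw [← hdiff]; linarith
      rw [div_le_one hNK] at h6
      rw [zpow_natCast]
      exact h6
    have hsKz : slope i ≤ (K:ℤ) := by
      by_contra hcon
      push_neg at hcon
      exact absurd hsK (not_le_of_gt (zpow_lt_zpow_right₀ hN1 hcon))
    set K' : ℕ := ((K:ℤ) - slope i).toNat with hK'def
    have hK'z : (K' : ℤ) = (K:ℤ) - slope i := Int.toNat_of_nonneg (by omega)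
    have hpowK : (n:ℝ)^(slope i) * (n:ℝ)^(K' : ℕ) = (n:ℝ)^(K : ℕ) := by
      rw [← zpow_natCast (n:ℝ) K', ← zpow_natCast (n:ℝ) K, ← zpow_add₀ hNne]
      congr 1
      omega
    have hqK : qc i ≤ K' := by
      have h7 := hK2 i him
      have h8 : slope i ≤ ((slope i).toNat : ℤ) := Int.self_le_toNat _
      have h9 : ((qc i : ℤ)) + (slope i).toNat ≤ (K:ℤ) := by exact_mod_cast h7
      omega
    have hcK' := den_mono hn hqK (ec i) (hec i him)
    set e' : ℤ := ec i * (n:ℤ)^(K' - qc i) with he'def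
    have hval : ∀ x : UnitInt, (x:ℝ) ∈ Set.Icc ((j:ℝ)/(n:ℝ)^K) (((j:ℝ)+1)/(n:ℝ)^K) →
        (f x : ℝ) * (n:ℝ)^K' = (x:ℝ) * (n:ℝ)^K + (e' : ℝ) := by
      intro x hx
      have hIccx : (x:ℝ) ∈ Set.Icc (t i) (t (i+1)) := ⟨le_trans hti hx.1, le_trans hx.2 hti1⟩
      have hvx := haff i him x hIccx
      rw [hvx]
      calc ((n:ℝ)^(slope i) * (x:ℝ) + c i) * (n:ℝ)^K'
          = (x:ℝ) * ((n:ℝ)^(slope i) * (n:ℝ)^K') + c i * (n:ℝ)^K' := by ring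
        _ = (x:ℝ) * (n:ℝ)^K + (e':ℝ) := by rw [hpowK, hcK']
    have hx0val := hval ⟨_, hmemj⟩ ⟨le_refl _, hgridle⟩
    have hx1val := hval ⟨_, hmemj1⟩ ⟨hgridle, le_refl _⟩
    have hNK' := npow_pos' hn (k := K')
    have hcoe0 : ((⟨(j:ℝ)/(n:ℝ)^K, hmemj⟩ : UnitInt) : ℝ) = (j:ℝ)/(n:ℝ)^K := rfl
    have hcoe1 : ((⟨((j:ℝ)+1)/(n:ℝ)^K, hmemj1⟩ : UnitInt) : ℝ) = ((j:ℝ)+1)/(n:ℝ)^K := rfl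
    have hjK : ((j:ℝ)/(n:ℝ)^K) * (n:ℝ)^K = (j:ℝ) := by field_simp
    have hjK1 : (((j:ℝ)+1)/(n:ℝ)^K) * (n:ℝ)^K = (j:ℝ)+1 := by field_simp
    rw [hcoe0, hjK] at hx0val
    rw [hcoe1, hjK1] at hx1val
    have ha0 : (0:ℤ) ≤ (j:ℤ) + e' := by
      have h10 : (0:ℝ) ≤ (j:ℝ) + (e':ℝ) := by nlinarith
      exact_mod_cast h10
    have ha1 : (j:ℤ) + e' + 1 ≤ (n:ℤ)^K' := by
      have h11 : (j:ℝ) + (e':ℝ) + 1 ≤ (n:ℝ)^K' := by nlinarith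
      exact_mod_cast h11
    have h13 : (((j:ℤ) + e').toNat : ℝ) = (j:ℝ) + (e':ℝ) := by
      have h := Int.toNat_of_nonneg ha0
      exact_mod_cast congrArg (fun z : ℤ => (z:ℝ)) h
    refine ⟨K', ((j:ℤ) + e').toNat, ?_, ?_⟩
    · have h14 : (((j:ℤ) + e').toNat : ℤ) < (n:ℤ)^K' := by
        rw [Int.toNat_of_nonneg ha0]; omega
      exact_mod_cast h14
    · intro x hx
      rw [hval x hx, h13]
      ring
  -- make the data of step A total functions
  have stepA' : ∀ j : ℕ, ∃ K' a' : ℕ, j < n^K → (a' < n^K' ∧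
      ∀ x : UnitInt, (x:ℝ) ∈ Set.Icc ((j:ℝ)/(n:ℝ)^K) (((j:ℝ)+1)/(n:ℝ)^K) →
        (f x : ℝ) * (n:ℝ)^K' = (a':ℝ) + ((x:ℝ) * (n:ℝ)^K - (j:ℝ))) := by
    intro j
    rcases Nat.lt_or_ge j (n^K) with h | h
    · obtain ⟨K', a', h1, h2⟩ := stepA j h
      exact ⟨K', a', fun _ => ⟨h1, h2⟩⟩
    · exact ⟨0, 0, fun hcon => absurd hcon (by omega)⟩
  choose Kf af hKf using stepA'
  -- applying the conjugated map
  have hFapp : ∀ y : UnitInt, ((Psi n hn * f * (Psi n hn)⁻¹) y : ℝ)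
      = psi n ((f ((Psi n hn).symm y)) : ℝ) := fun y => rfl
  have hsmF : StrictMono ⇑(Psi n hn * f * (Psi n hn)⁻¹) := by
    have h1 := Psi_strictMono hn
    have h2 := strictMono_homeo_symm h1
    intro x y hxy
    exact h1 (hsm (h2 hxy))
  refine ⟨hsmF, n^K, fun j => alpe n K j,
    fun j => (gam n K j : ℤ) - (gam n (Kf j) (af j) : ℤ),
    fun j => alp n (Kf j) (af j)
      - (2:ℝ)^((gam n K j : ℤ) - (gam n (Kf j) (af j) : ℤ)) * alp n K j,
    npow_pos hn K, alpe_zero hn K, alpe_top n K, ?_, ?_, ?_⟩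
  · intro i hi
    exact alpe_strict hn hi
  · intro i hi
    show IsNAdic 2 (alpe n K i)
    rcases Nat.lt_or_ge i (n^K) with h | h
    · rw [alpe_eq n h]
      exact alp_dyadic n K i
    · rw [alpe, if_neg (by omega)]
      exact isNAdic_one le_rfl
  · intro j hj y hy
    dsimp only at hy ⊢
    rw [hFapp y]
    set x : UnitInt := (Psi n hn).symm y with hxdef
    have hyx : psi n (x:ℝ) = (y:ℝ) := by
      have h1 := (Psi n hn).apply_symm_apply y
      calc psi n (x:ℝ) = ((Psi n hn) x : ℝ) := rfl
        _ = (y:ℝ) := by rw [h1]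
    have hxmem := x.2
    have hjr : ((j:ℝ)+1) ≤ (n:ℝ)^K := by
      have h5 : ((j+1 : ℕ):ℝ) ≤ ((n^K : ℕ):ℝ) := by exact_mod_cast Nat.succ_le_of_lt hj
      push_cast at h5
      linarith
    have hgmemj : (j:ℝ)/(n:ℝ)^K ∈ Set.Icc (0:ℝ) 1 := by
      constructor
      · positivity
      · rw [div_le_one hNK]; linarith
    have hgmemj1 : ((j:ℝ)+1)/(n:ℝ)^K ∈ Set.Icc (0:ℝ) 1 := by
      constructor
      · positivity
      · rw [div_le_one hNK]; linarith
    have hgridj : psi n ((j:ℝ)/(n:ℝ)^K) = alpe n K j := psi_grid hn (le_of_lt hj)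
    have hgridj1 : psi n (((j:ℝ)+1)/(n:ℝ)^K) = alpe n K (j+1) := by
      have h := psi_grid hn (show j+1 ≤ n^K by omega)
      push_cast at h
      exact h
    have hxlo : (j:ℝ)/(n:ℝ)^K ≤ (x:ℝ) := by
      by_contra hcon
      push_neg at hcon
      have h1 := psi_strictOn hn hxmem hgmemj hcon
      rw [hyx, hgridj] at h1
      exact absurd hy.1 (not_le_of_gt h1)
    have hxhi : (x:ℝ) ≤ ((j:ℝ)+1)/(n:ℝ)^K := by
      by_contra hcon
      push_neg at hcon
      have h1 := psi_strictOn hn hgmemj1 hxmem hcon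
      rw [hyx, hgridj1] at h1
      exact absurd hy.2 (not_le_of_gt h1)
    have hu0 : (0:ℝ) ≤ (x:ℝ)*(n:ℝ)^K - j := by
      have h1 := (div_le_iff₀ hNK).1 hxlo
      linarith
    have hu1 : (x:ℝ)*(n:ℝ)^K - j ≤ 1 := by
      have h1 := (le_div_iff₀ hNK).1 hxhi
      linarith
    obtain ⟨ha'lt, hform⟩ := hKf j hj
    have hfx := hform x ⟨hxlo, hxhi⟩
    have hNK' := npow_pos' hn (k := Kf j)
    have hfxd : ((f x) : ℝ) = ((af j : ℝ) + ((x:ℝ)*(n:ℝ)^K - j))/(n:ℝ)^(Kf j) := by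
      rw [eq_div_iff (ne_of_gt hNK')]
      exact hfx
    have hss1 : psi n ((f x : ℝ)) = alp n (Kf j) (af j)
        + bet n (Kf j) (af j) * psi n ((x:ℝ)*(n:ℝ)^K - j) := by
      rw [hfxd]
      exact psi_selfsim hn ha'lt ⟨hu0, hu1⟩
    have hxe : (x:ℝ) = ((j:ℝ) + ((x:ℝ)*(n:ℝ)^K - j))/(n:ℝ)^K := by
      field_simp
      ring
    have hss2 : (y:ℝ) = alp n K j + bet n K j * psi n ((x:ℝ)*(n:ℝ)^K - j) := by
      calc (y:ℝ) = psi n (x:ℝ) := hyx.symm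
        _ = psi n (((j:ℝ) + ((x:ℝ)*(n:ℝ)^K - j))/(n:ℝ)^K) := by rw [← hxe]
        _ = alp n K j + bet n K j * psi n ((x:ℝ)*(n:ℝ)^K - j) :=
            psi_selfsim hn hj ⟨hu0, hu1⟩
    have hbb : bet n (Kf j) (af j)
        = (2:ℝ)^((gam n K j : ℤ) - (gam n (Kf j) (af j) : ℤ)) * bet n K j := by
      rw [bet, bet]
      have hq : ∀ g : ℕ, (2:ℝ)⁻¹ ^ g = (2:ℝ)^(-(g:ℤ)) := by
        intro g
        rw [zpow_neg, zpow_natCast, inv_pow]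
      rw [hq, hq, ← zpow_add₀ (two_ne_zero)]
      congr 1
      ring
    have h2c : ((2:ℕ):ℝ) = (2:ℝ) := by norm_num
    rw [hss1, h2c, hss2]
    linear_combination (psi n ((x:ℝ)*(n:ℝ)^K - j)) * hbb

lemma conj_mem' (hn : 2 ≤ n) (g : UnitInt ≃ₜ UnitInt) (hg : g ∈ FnSet n) :
    (MulAut.conj (Psi n hn)).toMonoidHom g ∈ Fn 2 := by
  have h1 : (MulAut.conj (Psi n hn)).toMonoidHom g = Psi n hn * g * (Psi n hn)⁻¹ := rfl
  rw [h1]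
  exact Subgroup.subset_closure (conj_mem hn g hg)


end Emb

/-- For every integer `n ≥ 2` there exists an injective group
homomorphism from Thompson's group `F_n` into Thompson's group `F_2 = F`. -/
theorem exists_injective_hom_Fn_to_F2 (n : ℕ) (hn : 2 ≤ n) :
    ∃ φ : Fn n →* Fn 2, Function.Injective φ := by
  have hle : Fn n ≤ Subgroup.comap (MulAut.conj (Psi n hn)).toMonoidHom (Fn 2) := by
    rw [Fn, Subgroup.closure_le]
    intro g hg
    exact conj_mem' hn g hg
  refine ⟨MonoidHom.codRestrict
    (((MulAut.conj (Psi n hn)).toMonoidHom).comp (Fn n).subtype) (Fn 2)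
    (fun g => hle g.2), ?_⟩
  intro a b hab
  have h1 : (MulAut.conj (Psi n hn)).toMonoidHom a.1
      = (MulAut.conj (Psi n hn)).toMonoidHom b.1 := by
    have h2 := congrArg Subtype.val hab
    exact h2
  have h3 : (a : UnitInt ≃ₜ UnitInt) = b := (MulAut.conj (Psi n hn)).injective h1
  exact Subtype.ext h3

end ThompsonPaper
end
end

section
/- For every positive integer m, Thompson's group T = T_2 contains an element of order exactly m. -/
noncomputable section

namespace ThompsonPaper

/-- The circle `ℝ/ℤ`. -/
abbrev Circle : Type := AddCircle (1 : ℝ)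

/-- The set of `n`-adic points of the circle. -/
def nAdicPoints (n : ℕ) : Set Circle := { p | ∃ x : ℝ, IsNAdic n x ∧ p = (x : Circle) }

/-- `F : ℝ → ℝ` is a lift of the circle map `f`. -/
def IsLift (f : Circle ≃ₜ Circle) (F : ℝ → ℝ) : Prop :=
  ∀ x : ℝ, f (x : Circle) = ((F x : ℝ) : Circle)

/-- `F : ℝ → ℝ` commutes with translation by `1` and is piecewise affine with finitely
many breakpoints (modulo `1`), all breakpoints at `n`-adic rationals, and with the slope
of every affine piece an integer power of `n`. -/
def PiecewiseNAffine (n : ℕ) (F : ℝ → ℝ) : Prop :=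
  (∀ x : ℝ, F (x + 1) = F x + 1) ∧
  ∃ m : ℕ, ∃ t : ℕ → ℝ, ∃ slope : ℕ → ℤ, ∃ c : ℕ → ℝ,
    0 < m ∧ t 0 = 0 ∧ t m = 1 ∧
    (∀ i, i < m → t i < t (i + 1)) ∧
    (∀ i, i ≤ m → IsNAdic n (t i)) ∧
    (∀ i, i < m → ∀ x ∈ Set.Icc (t i) (t (i + 1)),
      F x = (n : ℝ) ^ (slope i) * x + c i)

/-- Membership in Thompson's group `T_n`: an orientation-preserving homeomorphism of the
circle `ℝ/ℤ` mapping the set of `n`-adic points onto itself, which is piecewise affine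
with finitely many breakpoints, all breakpoints at `n`-adic points, and all slopes integer
powers of `n`.  (Orientation preservation and the piecewise affine structure are expressed
through a strictly increasing lift.) -/
def InT (n : ℕ) (f : Circle ≃ₜ Circle) : Prop :=
  f '' nAdicPoints n = nAdicPoints n ∧
  ∃ F : ℝ → ℝ, StrictMono F ∧ IsLift f F ∧ PiecewiseNAffine n F

/-- Thompson's group `T_n`, as a set of circle homeomorphisms. -/
def TnSet (n : ℕ) : Set (Circle ≃ₜ Circle) := { f | InT n f }

/-! ### Auxiliary development -/

open Set

/-- step width -/
def EE (M : ℕ) : ℝ := (1/2) ^ (M+1)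

lemma EE_pos (M : ℕ) : 0 < EE M := by unfold EE; positivity

lemma EE_le_half (M : ℕ) : EE M ≤ 1/2 := by
  have : ((1:ℝ)/2) ^ (M+1) ≤ (1/2)^1 :=
    pow_le_pow_of_le_one (by norm_num) (by norm_num) (Nat.le_add_left 1 M)
  simpa [EE] using this

lemma EE_mul (M : ℕ) : (2:ℝ)^M * EE M = 1/2 := by
  have : ((1:ℝ)/2)^M * (2:ℝ)^M = 1 := by
    rw [← mul_pow]; norm_num
  simp only [EE, pow_succ]
  nlinarith [this]

def Gm (M : ℕ) (y : ℝ) : ℝ :=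
  max (max ((y+1)/2) (y + EE M)) (1 + 2^M * (y - (1 - EE M)))

def Hm (M : ℕ) (y : ℝ) : ℝ :=
  min (min (2*y - 1) (y - EE M)) ((1 - EE M) + 2 * EE M * (y - 1))

lemma Gm_strictMono (M : ℕ) : StrictMono (Gm M) := by
  have h1 : StrictMono (fun y : ℝ => (y+1)/2) := fun a b h => by dsimp; linarith
  have h2 : StrictMono (fun y : ℝ => y + EE M) := fun a b h => by dsimp; linarith
  have h3 : StrictMono (fun y : ℝ => 1 + 2^M * (y - (1 - EE M))) := fun a b h => by
    dsimp
    have hp : (0:ℝ) < 2^M := by positivity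
    have := mul_lt_mul_of_pos_left (show a - (1 - EE M) < b - (1 - EE M) by linarith) hp
    linarith
  exact fun a b h => max_lt_max (max_lt_max (h1 h) (h2 h)) (h3 h)

lemma Hm_strictMono (M : ℕ) : StrictMono (Hm M) := by
  have h1 : StrictMono (fun y : ℝ => 2*y - 1) := fun a b h => by dsimp; linarith
  have h2 : StrictMono (fun y : ℝ => y - EE M) := fun a b h => by dsimp; linarith
  have h3 : StrictMono (fun y : ℝ => (1 - EE M) + 2 * EE M * (y - 1)) := fun a b h => by
    dsimp
    have hp := EE_pos M
    nlinarith
  exact fun a b h => min_lt_min (min_lt_min (h1 h) (h2 h)) (h3 h)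

lemma Hm_Gm (M : ℕ) (y : ℝ) : Hm M (Gm M y) = y := by
  have he := EE_pos M
  have hm := EE_mul M
  have h2 : (0:ℝ) < 2^M := by positivity
  have g1 : (y+1)/2 ≤ Gm M y := le_trans (le_max_left _ _) (le_max_left _ _)
  have g2 : y + EE M ≤ Gm M y := le_trans (le_max_right _ _) (le_max_left _ _)
  have g3 : 1 + 2^M * (y - (1 - EE M)) ≤ Gm M y := le_max_right _ _
  have l1 : y ≤ 2 * Gm M y - 1 := by linarith
  have l2 : y ≤ Gm M y - EE M := by linarith
  have l3 : y ≤ (1 - EE M) + 2 * EE M * (Gm M y - 1) := by nlinarith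
  have hcases : Gm M y = (y+1)/2 ∨ Gm M y = y + EE M ∨ Gm M y = 1 + 2^M * (y - (1 - EE M)) := by
    rcases max_choice (max ((y+1)/2) (y + EE M)) (1 + 2^M * (y - (1 - EE M))) with h | h
    · rcases max_choice ((y+1)/2) (y + EE M) with h' | h'
      · exact Or.inl (by rw [Gm, h, h'])
      · exact Or.inr (Or.inl (by rw [Gm, h, h']))
    · exact Or.inr (Or.inr (by rw [Gm, h]))
  have hle : Hm M (Gm M y) ≤ y := by
    rcases hcases with h | h | h
    · exact le_trans (min_le_of_left_le (min_le_left _ _)) (by rw [h]; linarith)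
    · exact le_trans (min_le_of_left_le (min_le_right _ _)) (by rw [h]; linarith)
    · refine le_trans (min_le_right _ _) ?_
      rw [h]; nlinarith
  have hge : y ≤ Hm M (Gm M y) := le_min (le_min l1 l2) l3
  linarith

lemma Gm_Hm (M : ℕ) (y : ℝ) : Gm M (Hm M y) = y := by
  have he := EE_pos M
  have hm := EE_mul M
  have h2 : (0:ℝ) < 2^M := by positivity
  have g1 : Hm M y ≤ 2*y - 1 := le_trans (min_le_left _ _) (min_le_left _ _)
  have g2 : Hm M y ≤ y - EE M := le_trans (min_le_left _ _) (min_le_right _ _)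
  have g3 : Hm M y ≤ (1 - EE M) + 2 * EE M * (y - 1) := min_le_right _ _
  have l1 : (Hm M y + 1)/2 ≤ y := by linarith
  have l2 : Hm M y + EE M ≤ y := by linarith
  have l3 : 1 + 2^M * (Hm M y - (1 - EE M)) ≤ y := by nlinarith
  have hcases : Hm M y = 2*y-1 ∨ Hm M y = y - EE M ∨ Hm M y = (1 - EE M) + 2 * EE M * (y - 1) := by
    rcases min_choice (min (2*y-1) (y - EE M)) ((1 - EE M) + 2 * EE M * (y - 1)) with h | h
    · rcases min_choice (2*y-1) (y - EE M) with h' | h'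
      · exact Or.inl (by rw [Hm, h, h'])
      · exact Or.inr (Or.inl (by rw [Hm, h, h']))
    · exact Or.inr (Or.inr (by rw [Hm, h]))
  have hge : y ≤ Gm M (Hm M y) := by
    rcases hcases with h | h | h
    · exact le_trans (by rw [h]; linarith) (le_trans (le_max_left _ _) (le_max_left _ _))
    · exact le_trans (by rw [h]; linarith) (le_trans (le_max_right _ _) (le_max_left _ _))
    · refine le_trans ?_ (le_max_right _ _)
      rw [h]; nlinarith
  have hle : Gm M (Hm M y) ≤ y := max_le (max_le l1 l2) l3
  linarith

lemma Gm_eq1 (M : ℕ) {y : ℝ} (hy : y ∈ Icc (0:ℝ) (1 - 2*EE M)) : Gm M y = (y+1)/2 := by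
  obtain ⟨h0, h1⟩ := hy
  have he := EE_pos M
  have hm := EE_mul M
  have h2 : (0:ℝ) < 2^M := by positivity
  have h2' : (1:ℝ) ≤ 2^M := one_le_pow₀ (by norm_num)
  have a1 : y + EE M ≤ (y+1)/2 := by linarith
  have a2 : 1 + 2^M * (y - (1 - EE M)) ≤ (y+1)/2 := by nlinarith
  rw [Gm, max_eq_left a1, max_eq_left a2]

lemma Gm_eq2 (M : ℕ) {y : ℝ} (hy : y ∈ Icc (1 - 2*EE M) (1 - EE M)) : Gm M y = y + EE M := by
  obtain ⟨h0, h1⟩ := hy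
  have he := EE_pos M
  have hm := EE_mul M
  have h2 : (0:ℝ) < 2^M := by positivity
  have h2' : (1:ℝ) ≤ 2^M := one_le_pow₀ (by norm_num)
  have a1 : (y+1)/2 ≤ y + EE M := by linarith
  have a2 : 1 + 2^M * (y - (1 - EE M)) ≤ y + EE M := by nlinarith
  rw [Gm, max_eq_right a1, max_eq_left a2]

lemma Gm_eq3 (M : ℕ) {y : ℝ} (hy : y ∈ Icc (1 - EE M) 1) :
    Gm M y = 1 + 2^M * (y - (1 - EE M)) := by
  obtain ⟨h0, h1⟩ := hy
  have he := EE_pos M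
  have hm := EE_mul M
  have h2 : (0:ℝ) < 2^M := by positivity
  have h2' : (1:ℝ) ≤ 2^M := one_le_pow₀ (by norm_num)
  have a1 : (y+1)/2 ≤ 1 + 2^M * (y - (1 - EE M)) := by nlinarith
  have a2 : y + EE M ≤ 1 + 2^M * (y - (1 - EE M)) := by nlinarith
  rw [Gm, max_eq_right (max_le a1 a2)]

lemma Gm_zero (M : ℕ) : Gm M 0 = 1/2 := by
  have := Gm_eq1 M (y := 0) ⟨le_refl 0, by have := EE_le_half M; have := EE_pos M; linarith⟩
  simpa using this

lemma Gm_one (M : ℕ) : Gm M 1 = 3/2 := by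
  have := Gm_eq3 M (y := 1) ⟨by have := EE_pos M; linarith, le_refl 1⟩
  rw [this]
  have := EE_mul M; nlinarith [EE_pos M]


/-! ### The lift -/

lemma Gm_continuous (M : ℕ) : Continuous (Gm M) := by
  unfold Gm; fun_prop

lemma Hm_continuous (M : ℕ) : Continuous (Hm M) := by
  unfold Hm; fun_prop

def Fm (M : ℕ) (x : ℝ) : ℝ := ⌊x⌋ + Gm M (Int.fract x)

lemma Fm_eq_Gm (M : ℕ) {y : ℝ} (hy : y ∈ Icc (0:ℝ) 1) : Fm M y = Gm M y := by
  rcases eq_or_lt_of_le hy.2 with h | h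
  · subst h
    have : Fm M 1 = 1 + Gm M 0 := by
      simp [Fm, Int.fract_one, Int.floor_one]
    rw [this, Gm_zero, Gm_one]; norm_num
  · have hy0 := hy.1
    have hfl : ⌊y⌋ = 0 := Int.floor_eq_zero_iff.mpr ⟨hy0, h⟩
    have hfr : Int.fract y = y := Int.fract_eq_self.mpr ⟨hy0, h⟩
    simp [Fm, hfl, hfr]

lemma Fm_add_one (M : ℕ) (x : ℝ) : Fm M (x + 1) = Fm M x + 1 := by
  have h1 : ⌊x + 1⌋ = ⌊x⌋ + 1 := by
    simpa using Int.floor_add_int x 1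
  have h2 : Int.fract (x + 1) = Int.fract x := by
    simpa using Int.fract_add_int x 1
  simp [Fm, h1, h2]; ring

lemma Gm_lt (M : ℕ) {y : ℝ} (hy : y ∈ Ico (0:ℝ) 1) : Gm M y ∈ Ico (1/2 : ℝ) (3/2) := by
  constructor
  · rw [← Gm_zero M]; exact (Gm_strictMono M).monotone hy.1
  · rw [← Gm_one M]; exact Gm_strictMono M hy.2

lemma Hm_lt (M : ℕ) {y : ℝ} (hy : y ∈ Ico (1/2:ℝ) (3/2)) : Hm M y ∈ Ico (0:ℝ) 1 := by
  have h0 : Hm M (1/2 : ℝ) = 0 := by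
    have := Hm_Gm M 0; rwa [Gm_zero] at this
  have h1 : Hm M (3/2 : ℝ) = 1 := by
    have := Hm_Gm M 1; rwa [Gm_one] at this
  constructor
  · rw [← h0]; exact (Hm_strictMono M).monotone hy.1
  · rw [← h1]; exact Hm_strictMono M hy.2

lemma Fm_strictMono (M : ℕ) : StrictMono (Fm M) := by
  intro x y h
  rcases eq_or_lt_of_le (Int.floor_le_floor h.le) with hf | hf
  · have hfr : Int.fract x < Int.fract y := by
      rw [Int.fract, Int.fract, hf]; linarith
    have := Gm_strictMono M hfr
    simp only [Fm]; rw [hf]; linarith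
  · have hx := Gm_lt M (y := Int.fract x) ⟨Int.fract_nonneg x, Int.fract_lt_one x⟩
    have hy := Gm_lt M (y := Int.fract y) ⟨Int.fract_nonneg y, Int.fract_lt_one y⟩
    have : (⌊x⌋ : ℝ) + 1 ≤ (⌊y⌋ : ℝ) := by exact_mod_cast hf
    simp only [Fm]
    have := hx.2; have := hy.1
    linarith

/-! ### The circle homeomorphism -/

lemma coe_add_int (x : ℝ) (n : ℤ) : ((x + n : ℝ) : Circle) = (x : Circle) := by
  have : ((n:ℝ) : Circle) = 0 := (AddCircle.coe_eq_zero_iff 1).mpr ⟨n, by simp⟩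
  rw [AddCircle.coe_add, this, add_zero]

lemma circle_rep (p : Circle) : ∃ y : ℝ, y ∈ Ico (0:ℝ) 1 ∧ p = (y : Circle) := by
  obtain ⟨z, rfl⟩ := QuotientAddGroup.mk_surjective p
  refine ⟨Int.fract z, ⟨Int.fract_nonneg z, Int.fract_lt_one z⟩, ?_⟩
  have : z = Int.fract z + (⌊z⌋ : ℤ) := by rw [Int.fract]; ring
  calc (z : Circle) = ((Int.fract z + (⌊z⌋:ℤ) : ℝ) : Circle) := by rw [← this]
    _ = _ := coe_add_int _ _

def fT (M : ℕ) : Circle ≃ₜ Circle where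
  toFun := AddCircle.liftIco 1 0 (fun y => ((Gm M y : ℝ) : Circle))
  invFun := AddCircle.liftIco 1 (1/2) (fun y => ((Hm M y : ℝ) : Circle))
  left_inv := by
    intro p
    obtain ⟨y, hy, rfl⟩ := circle_rep p
    have h1 : AddCircle.liftIco 1 0 (fun y => ((Gm M y : ℝ) : Circle)) y = (Gm M y : Circle) :=
      AddCircle.liftIco_coe_apply (by simpa using hy)
    rw [h1]
    have h2 : AddCircle.liftIco 1 (1/2) (fun y => ((Hm M y : ℝ) : Circle)) (Gm M y : ℝ)
        = (Hm M (Gm M y) : Circle) :=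
      AddCircle.liftIco_coe_apply
        (Set.mem_Ico.mpr ⟨(Gm_lt M hy).1, by linarith [(Gm_lt M hy).2]⟩)
    rw [h2, Hm_Gm]
  right_inv := by
    intro p
    obtain ⟨y, hy, rfl⟩ := circle_rep p
    obtain ⟨z, hz, hzy⟩ : ∃ z : ℝ, z ∈ Ico (1/2:ℝ) (3/2) ∧ (y : Circle) = (z : Circle) := by
      rcases le_or_gt (1/2 : ℝ) y with h | h
      · exact ⟨y, ⟨h, by linarith [hy.2]⟩, rfl⟩
      · exact ⟨y + 1, ⟨by linarith [hy.1], by linarith⟩,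
          by simpa using (coe_add_int y 1).symm⟩
    rw [hzy]
    have h1 : AddCircle.liftIco 1 (1/2) (fun y => ((Hm M y : ℝ) : Circle)) z
        = (Hm M z : Circle) :=
      AddCircle.liftIco_coe_apply (Set.mem_Ico.mpr ⟨hz.1, by linarith [hz.2]⟩)
    rw [h1]
    have h2 : AddCircle.liftIco 1 0 (fun y => ((Gm M y : ℝ) : Circle)) (Hm M z : ℝ)
        = (Gm M (Hm M z) : Circle) :=
      AddCircle.liftIco_coe_apply (by simpa using Hm_lt M hz)
    rw [h2, Gm_Hm]
  continuous_toFun := by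
    show Continuous (AddCircle.liftIco 1 0 (fun y => ((Gm M y : ℝ) : Circle)))
    apply AddCircle.liftIco_continuous
    · show ((Gm M 0 : ℝ) : Circle) = ((Gm M (0+1) : ℝ) : Circle)
      rw [Gm_zero]
      norm_num
      rw [Gm_one]
      rw [show (3/2 : ℝ) = 1/2 + (1:ℤ) by norm_num, coe_add_int]
    · exact ((AddCircle.continuous_mk' 1).comp (Gm_continuous M)).continuousOn
  continuous_invFun := by
    show Continuous (AddCircle.liftIco 1 (1/2) (fun y => ((Hm M y : ℝ) : Circle)))
    apply AddCircle.liftIco_continuous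
    · show ((Hm M (1/2) : ℝ) : Circle) = ((Hm M (1/2+1) : ℝ) : Circle)
      have h0 : Hm M (1/2 : ℝ) = 0 := by
        have := Hm_Gm M 0; rwa [Gm_zero] at this
      have h1 : Hm M (3/2 : ℝ) = 1 := by
        have := Hm_Gm M 1; rwa [Gm_one] at this
      rw [h0, show (1/2 + 1 : ℝ) = 3/2 by norm_num, h1,
        show ((1:ℝ) : Circle) = ((0 + (1:ℤ) : ℝ) : Circle) by norm_num, coe_add_int]
    · exact ((AddCircle.continuous_mk' 1).comp (Hm_continuous M)).continuousOn

lemma fT_lift (M : ℕ) : IsLift (fT M) (Fm M) := by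
  intro x
  have hx : (x : Circle) = ((Int.fract x : ℝ) : Circle) := by
    have : x = Int.fract x + (⌊x⌋ : ℤ) := by rw [Int.fract]; ring
    calc (x : Circle) = ((Int.fract x + (⌊x⌋:ℤ) : ℝ) : Circle) := by rw [← this]
      _ = _ := coe_add_int _ _
  have h1 : fT M ((Int.fract x : ℝ) : Circle) = ((Gm M (Int.fract x) : ℝ) : Circle) := by
    show AddCircle.liftIco 1 0 (fun y => ((Gm M y : ℝ) : Circle)) _ = _
    exact AddCircle.liftIco_coe_apply (Set.mem_Ico.mpr
      ⟨Int.fract_nonneg x, by rw [zero_add]; exact Int.fract_lt_one x⟩)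
  have h2 : ((Fm M x : ℝ) : Circle) = ((Gm M (Int.fract x) : ℝ) : Circle) := by
    rw [Fm, add_comm]
    exact coe_add_int _ _
  rw [hx, h1, h2]


/-! ### Iteration -/

lemma Fm_iterA (M : ℕ) : ∀ j, j ≤ M → ∀ x ∈ Icc (0:ℝ) (1/2),
    (Fm M)^[j] x = 1 - (1/2)^j + (1/2)^j * x := by
  intro j
  induction j with
  | zero => intro _ x _; simp
  | succ j ih =>
    intro hj x hx
    have hj' : j ≤ M := le_trans (Nat.le_succ j) hj
    rw [Function.iterate_succ_apply', ih hj' x hx]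
    set y := 1 - (1/2:ℝ)^j + (1/2:ℝ)^j * x with hy
    have hp : (0:ℝ) < (1/2:ℝ)^j := by positivity
    have hple : ((1:ℝ)/2)^j ≤ 1 := pow_le_one₀ (by norm_num) (by norm_num)
    have hEE : 2 * EE M ≤ (1/2:ℝ)^(j+1) := by
      have h1 : ((1:ℝ)/2)^M ≤ (1/2)^(j+1) :=
        pow_le_pow_of_le_one (by norm_num) (by norm_num) hj
      have h2 : 2 * EE M = ((1:ℝ)/2)^M := by rw [EE, pow_succ]; ring
      linarith
    have hyIcc : y ∈ Icc (0:ℝ) (1 - 2*EE M) := by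
      constructor
      · have : (1/2:ℝ)^j * x ≥ 0 := mul_nonneg hp.le hx.1
        simp only [hy]; linarith
      · have h3 : (1/2:ℝ)^j * x ≤ (1/2)^j * (1/2) := by
          exact mul_le_mul_of_nonneg_left hx.2 hp.le
        have h4 : ((1:ℝ)/2)^j * (1/2) = (1/2)^(j+1) := by rw [pow_succ]
        simp only [hy]; linarith
    have hyIcc1 : y ∈ Icc (0:ℝ) 1 := ⟨hyIcc.1, by linarith [hyIcc.2, EE_pos M]⟩
    rw [Fm_eq_Gm M hyIcc1, Gm_eq1 M hyIcc]
    simp only [hy, pow_succ]; ring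

lemma Fm_iterB (M : ℕ) : ∀ x ∈ Icc (0:ℝ) (1/2),
    (Fm M)^[M+1] x = (1 - EE M) + 2 * EE M * x := by
  intro x hx
  rw [Function.iterate_succ_apply', Fm_iterA M M le_rfl x hx]
  set y := 1 - (1/2:ℝ)^M + (1/2:ℝ)^M * x with hy
  have h2 : 2 * EE M = ((1:ℝ)/2)^M := by rw [EE, pow_succ]; ring
  have hp : (0:ℝ) < (1/2:ℝ)^M := by positivity
  have hyIcc : y ∈ Icc (1 - 2*EE M) (1 - EE M) := by
    constructor
    · have : (1/2:ℝ)^M * x ≥ 0 := mul_nonneg hp.le hx.1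
      simp only [hy]; linarith
    · have h3 : (1/2:ℝ)^M * x ≤ (1/2)^M * (1/2) := mul_le_mul_of_nonneg_left hx.2 hp.le
      have h4 : ((1:ℝ)/2)^M * (1/2) = EE M := by rw [EE, pow_succ]
      simp only [hy]; linarith
  have hyIcc1 : y ∈ Icc (0:ℝ) 1 := by
    constructor
    · have := hyIcc.1
      have h5 : 2 * EE M ≤ 1 := by
        have := EE_le_half M; linarith
      linarith
    · linarith [hyIcc.2, EE_pos M]
  rw [Fm_eq_Gm M hyIcc1, Gm_eq2 M hyIcc]
  simp only [hy]; rw [← h2]; ring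

lemma Fm_iterC (M : ℕ) : ∀ x ∈ Icc (0:ℝ) (1/2),
    (Fm M)^[M+2] x = x + 1 := by
  intro x hx
  rw [show M + 2 = (M+1) + 1 by ring, Function.iterate_succ_apply', Fm_iterB M x hx]
  set y := 1 - EE M + 2 * EE M * x with hy
  have he := EE_pos M
  have hm := EE_mul M
  have hyIcc : y ∈ Icc (1 - EE M) 1 := by
    constructor
    · have : 2 * EE M * x ≥ 0 := mul_nonneg (by positivity) hx.1
      simp only [hy]; linarith
    · have h3 : 2 * EE M * x ≤ 2 * EE M * (1/2) := by nlinarith [hx.2]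
      simp only [hy]; linarith
  have hyIcc1 : y ∈ Icc (0:ℝ) 1 := ⟨by linarith [hyIcc.1, EE_le_half M], hyIcc.2⟩
  rw [Fm_eq_Gm M hyIcc1, Gm_eq3 M hyIcc]
  have h2 : (2:ℝ)^M * (y - (1 - EE M)) = 2^M * (2 * EE M) * x := by
    simp only [hy]; ring
  rw [h2]
  have h3 : (2:ℝ)^M * (2 * EE M) = 1 := by
    rw [show (2:ℝ)^M * (2 * EE M) = 2 * ((2:ℝ)^M * EE M) by ring, hm]; norm_num
  rw [h3]; ring

/-- covering lemma -/
lemma Fm_cover (M : ℕ) : ∀ y ∈ Ico (0:ℝ) 1,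
    ∃ j, j ≤ M + 1 ∧ ∃ x ∈ Icc (0:ℝ) (1/2), (Fm M)^[j] x = y := by
  intro y hy
  rcases lt_or_ge y (1 - EE M) with hcase | hcase
  · -- find j ≤ M with 1 - (1/2)^j ≤ y < 1 - (1/2)^(j+1)
    have key : ∀ j : ℕ, y < 1 - (1/2:ℝ)^(j+1) →
        ∃ j' ≤ j, (1 - (1/2:ℝ)^j' ≤ y ∧ y < 1 - (1/2:ℝ)^(j'+1)) := by
      intro j
      induction j with
      | zero => intro h; exact ⟨0, le_rfl, by simpa using hy.1, h⟩
      | succ j ih =>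
        intro h
        rcases lt_or_ge y (1 - (1/2:ℝ)^(j+1)) with h' | h'
        · obtain ⟨j', hj', hgood⟩ := ih h'
          exact ⟨j', le_trans hj' (Nat.le_succ j), hgood⟩
        · exact ⟨j+1, le_rfl, h', h⟩
    have hM : y < 1 - (1/2:ℝ)^(M+1) := by
      rw [show ((1:ℝ)/2)^(M+1) = EE M from rfl]; exact hcase
    obtain ⟨j, hjM, hlo, hhi⟩ := key M hM
    refine ⟨j, le_trans hjM (Nat.le_succ M), 2^j * (y - 1) + 1, ?_, ?_⟩
    · have hp : (0:ℝ) < (2:ℝ)^j := by positivity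
      have hinv : (2:ℝ)^j * (1/2:ℝ)^j = 1 := by
        rw [← mul_pow]; norm_num
      constructor
      · nlinarith [hlo]
      · nlinarith [hhi, pow_succ (1/2:ℝ) j]
    · rw [Fm_iterA M j hjM _ ?mem]
      case mem =>
        have hp : (0:ℝ) < (2:ℝ)^j := by positivity
        have hinv : (2:ℝ)^j * (1/2:ℝ)^j = 1 := by rw [← mul_pow]; norm_num
        constructor
        · nlinarith [hlo]
        · nlinarith [hhi, pow_succ (1/2:ℝ) j]
      have hinv : (1/2:ℝ)^j * (2:ℝ)^j = 1 := by rw [← mul_pow]; norm_num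
      linear_combination (y - 1) * hinv
  · refine ⟨M+1, le_rfl, 2^M * (y - (1 - EE M)), ?_, ?_⟩
    · have he := EE_pos M
      have hm := EE_mul M
      have hp : (0:ℝ) < (2:ℝ)^M := by positivity
      constructor
      · nlinarith
      · nlinarith [hy.2]
    · rw [Fm_iterB M _ ?mem]
      case mem =>
        have he := EE_pos M
        have hm := EE_mul M
        have hp : (0:ℝ) < (2:ℝ)^M := by positivity
        constructor
        · nlinarith
        · nlinarith [hy.2]
      have hm := EE_mul M
      linear_combination (2 * (y - (1 - EE M))) * hm


/-! ### Powers and order -/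

lemma pow_apply (g : Circle ≃ₜ Circle) : ∀ (k : ℕ) (p : Circle), (g ^ k) p = g^[k] p := by
  intro k
  induction k with
  | zero => intro p; rfl
  | succ k ih =>
    intro p
    rw [pow_succ, Function.iterate_succ_apply]
    exact ih (g p)

lemma fT_iter_lift (M : ℕ) : ∀ (k : ℕ) (x : ℝ),
    (fT M)^[k] ((x : ℝ) : Circle) = (((Fm M)^[k] x : ℝ) : Circle) := by
  intro k
  induction k with
  | zero => intro x; rfl
  | succ k ih =>
    intro x
    rw [Function.iterate_succ_apply', Function.iterate_succ_apply', ih x]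
    exact fT_lift M _

lemma fT_pow_eq_one (M : ℕ) : (fT M) ^ (M + 2) = 1 := by
  apply Homeomorph.ext
  intro p
  obtain ⟨y, hy, rfl⟩ := circle_rep p
  obtain ⟨j, hj, x, hx, hFx⟩ := Fm_cover M y hy
  have hyx : ((y : ℝ) : Circle) = (fT M)^[j] ((x : ℝ) : Circle) := by
    rw [fT_iter_lift M j x, hFx]
  have key : (fT M)^[M+2] ((x : ℝ) : Circle) = ((x : ℝ) : Circle) := by
    rw [fT_iter_lift M (M+2) x, Fm_iterC M x hx]
    simpa using coe_add_int x 1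
  calc ((fT M) ^ (M+2)) ((y : ℝ) : Circle)
      = (fT M)^[M+2] ((fT M)^[j] ((x : ℝ) : Circle)) := by rw [pow_apply, hyx]
    _ = (fT M)^[j] ((fT M)^[M+2] ((x : ℝ) : Circle)) := by
        rw [← Function.iterate_add_apply, ← Function.iterate_add_apply, Nat.add_comm]
    _ = (fT M)^[j] ((x : ℝ) : Circle) := by rw [key]
    _ = (1 : Circle ≃ₜ Circle) ((y : ℝ) : Circle) := by rw [← hyx]; rfl

lemma Fm_iter_zero (M : ℕ) {k : ℕ} (hk : k ≤ M + 1) :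
    (Fm M)^[k] 0 = 1 - (1/2)^k := by
  rcases Nat.lt_or_ge k (M+1) with h | h
  · have := Fm_iterA M k (by omega) 0 ⟨le_refl 0, by norm_num⟩
    rw [this]; ring
  · have hk' : k = M + 1 := le_antisymm hk h
    subst hk'
    have := Fm_iterB M 0 ⟨le_refl 0, by norm_num⟩
    rw [this, EE]; ring

lemma fT_pow_ne_one (M : ℕ) (k : ℕ) (hk0 : 0 < k) (hk : k < M + 2) :
    (fT M) ^ k ≠ 1 := by
  intro h
  have h0 : ((fT M) ^ k) (((0:ℝ) : ℝ) : Circle) = (((0:ℝ) : ℝ) : Circle) := by rw [h]; rfl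
  rw [pow_apply, fT_iter_lift M k 0, Fm_iter_zero M (by omega)] at h0
  have hlt : ((1:ℝ)/2)^k ≤ 1/2 := by
    calc ((1:ℝ)/2)^k ≤ (1/2)^1 :=
      pow_le_pow_of_le_one (by norm_num) (by norm_num) hk0
    _ = 1/2 := by norm_num
  have hpos : (0:ℝ) < (1/2)^k := by positivity
  have hmem1 : (1 - (1/2:ℝ)^k) ∈ Ico (0:ℝ) (0 + 1) := by
    constructor
    · linarith
    · rw [zero_add]; linarith
  have hmem0 : (0:ℝ) ∈ Ico (0:ℝ) (0 + 1) := by norm_num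
  have := (AddCircle.coe_eq_coe_iff_of_mem_Ico hmem1 hmem0).mp h0
  linarith

lemma orderOf_fT (M : ℕ) : orderOf (fT M) = M + 2 := by
  rw [orderOf_eq_iff (by omega)]
  exact ⟨fT_pow_eq_one M, fun k hk hk0 => fT_pow_ne_one M k hk0 hk⟩


/-! ### Dyadic rationals -/

lemma dy_add {x y : ℝ} (hx : IsNAdic 2 x) (hy : IsNAdic 2 y) : IsNAdic 2 (x + y) := by
  obtain ⟨a, k, rfl⟩ := hx
  obtain ⟨b, j, rfl⟩ := hy
  refine ⟨a * 2^j + b * 2^k, k + j, ?_⟩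
  have h1 : ((2:ℕ):ℝ) = 2 := by norm_num
  rw [h1] at *
  rw [eq_div_iff (by positivity : ((2:ℝ))^(k+j) ≠ 0)]
  push_cast
  rw [pow_add]
  have hk : ((2:ℝ))^k ≠ 0 := by positivity
  have hj : ((2:ℝ))^j ≠ 0 := by positivity
  field_simp

lemma dy_neg {x : ℝ} (hx : IsNAdic 2 x) : IsNAdic 2 (-x) := by
  obtain ⟨a, k, rfl⟩ := hx
  exact ⟨-a, k, by push_cast; ring⟩

lemma dy_sub {x y : ℝ} (hx : IsNAdic 2 x) (hy : IsNAdic 2 y) : IsNAdic 2 (x - y) := by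
  rw [sub_eq_add_neg]; exact dy_add hx (dy_neg hy)

lemma dy_mul {x y : ℝ} (hx : IsNAdic 2 x) (hy : IsNAdic 2 y) : IsNAdic 2 (x * y) := by
  obtain ⟨a, k, rfl⟩ := hx
  obtain ⟨b, j, rfl⟩ := hy
  refine ⟨a * b, k + j, ?_⟩
  have h1 : ((2:ℕ):ℝ) = 2 := by norm_num
  rw [h1] at *
  rw [eq_div_iff (by positivity : ((2:ℝ))^(k+j) ≠ 0)]
  push_cast
  rw [pow_add]
  have hk : ((2:ℝ))^k ≠ 0 := by positivity
  have hj : ((2:ℝ))^j ≠ 0 := by positivity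
  field_simp

lemma dy_int (n : ℤ) : IsNAdic 2 (n : ℝ) := ⟨n, 0, by norm_num⟩

lemma dy_one : IsNAdic 2 1 := by simpa using dy_int 1

lemma dy_half_pow (k : ℕ) : IsNAdic 2 ((1/2:ℝ)^k) := by
  refine ⟨1, k, ?_⟩
  have h1 : ((2:ℕ):ℝ) = 2 := by norm_num
  rw [h1, div_pow, one_pow, one_div]
  norm_num

lemma dy_EE (M : ℕ) : IsNAdic 2 (EE M) := by rw [EE]; exact dy_half_pow (M+1)

lemma dy_two_pow (M : ℕ) : IsNAdic 2 ((2:ℝ)^M) := by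
  refine ⟨2^M, 0, by push_cast; norm_num⟩

lemma dy_Gm (M : ℕ) {y : ℝ} (hy : IsNAdic 2 y) : IsNAdic 2 (Gm M y) := by
  have c1 : IsNAdic 2 ((y+1)/2) := by
    have : (y+1)/2 = (y + 1) * (1/2)^1 := by ring
    rw [this]
    exact dy_mul (dy_add hy dy_one) (dy_half_pow 1)
  have c2 : IsNAdic 2 (y + EE M) := dy_add hy (dy_EE M)
  have c3 : IsNAdic 2 (1 + 2^M * (y - (1 - EE M))) :=
    dy_add dy_one (dy_mul (dy_two_pow M) (dy_sub hy (dy_sub dy_one (dy_EE M))))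
  rcases max_choice (max ((y+1)/2) (y + EE M)) (1 + 2^M * (y - (1 - EE M))) with h | h <;>
    rw [Gm, h]
  · rcases max_choice ((y+1)/2) (y + EE M) with h' | h' <;> rw [h']
    · exact c1
    · exact c2
  · exact c3

lemma dy_Hm (M : ℕ) {y : ℝ} (hy : IsNAdic 2 y) : IsNAdic 2 (Hm M y) := by
  have c1 : IsNAdic 2 (2*y - 1) := dy_sub (dy_mul (dy_int 2) hy) dy_one
  have c2 : IsNAdic 2 (y - EE M) := dy_sub hy (dy_EE M)
  have c3 : IsNAdic 2 ((1 - EE M) + 2 * EE M * (y - 1)) :=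
    dy_add (dy_sub dy_one (dy_EE M))
      (dy_mul (dy_mul (dy_int 2) (dy_EE M)) (dy_sub hy dy_one))
  rcases min_choice (min (2*y-1) (y - EE M)) ((1 - EE M) + 2 * EE M * (y - 1)) with h | h <;>
    rw [Hm, h]
  · rcases min_choice (2*y-1) (y - EE M) with h' | h' <;> rw [h']
    · exact c1
    · exact c2
  · exact c3

lemma dy_fract {x : ℝ} (hx : IsNAdic 2 x) : IsNAdic 2 (Int.fract x) := by
  rw [Int.fract]
  exact dy_sub hx (dy_int ⌊x⌋)

/-! ### The image of the dyadic points -/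

lemma fT_image (M : ℕ) : fT M '' nAdicPoints 2 = nAdicPoints 2 := by
  ext p
  constructor
  · rintro ⟨q, ⟨x, hx, rfl⟩, rfl⟩
    refine ⟨Fm M x, ?_, (fT_lift M x)⟩
    have h1 : Fm M x = (⌊x⌋ : ℝ) + Gm M (Int.fract x) := rfl
    rw [h1]
    exact dy_add (dy_int ⌊x⌋) (dy_Gm M (dy_fract hx))
  · rintro ⟨x, hx, rfl⟩
    set z := 1/2 + Int.fract (x - 1/2) with hz
    have hzdy : IsNAdic 2 z := by
      rw [hz]
      refine dy_add ?_ (dy_fract (dy_sub hx ?_))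
      · have : (1/2 : ℝ) = (1/2)^1 := by norm_num
        rw [this]; exact dy_half_pow 1
      · have : (1/2 : ℝ) = (1/2)^1 := by norm_num
        rw [this]; exact dy_half_pow 1
    have hzmem : z ∈ Ico (1/2 : ℝ) (1/2 + 1) := by
      constructor
      · have := Int.fract_nonneg (x - 1/2); rw [hz]; linarith
      · have := Int.fract_lt_one (x - 1/2); rw [hz]; linarith
    have hxz : ((x : ℝ) : Circle) = ((z : ℝ) : Circle) := by
      have : z = x + (-⌊x - 1/2⌋ : ℤ) := by
        rw [hz, Int.fract]; push_cast; ring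
      rw [this, coe_add_int]
    have hsymm : (fT M).symm ((z : ℝ) : Circle) = ((Hm M z : ℝ) : Circle) := by
      show AddCircle.liftIco 1 (1/2) (fun y => ((Hm M y : ℝ) : Circle)) _ = _
      exact AddCircle.liftIco_coe_apply hzmem
    refine ⟨(fT M).symm ((x : ℝ) : Circle), ?_, (fT M).apply_symm_apply _⟩
    rw [hxz, hsymm]
    exact ⟨Hm M z, dy_Hm M hzdy, rfl⟩

/-! ### Piecewise affine structure -/

lemma piecewise_fT (M : ℕ) : PiecewiseNAffine 2 (Fm M) := by
  constructor
  · exact Fm_add_one M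
  · rcases Nat.eq_zero_or_pos M with hM | hM
    · -- M = 0 : two pieces
      subst hM
      have hE : EE 0 = 1/2 := by rw [EE]; norm_num
      refine ⟨2, fun i => match i with | 0 => 0 | 1 => 1/2 | _ => 1,
        fun _ => 0, fun _ => 1/2, by norm_num, rfl, rfl, ?_, ?_, ?_⟩
      · intro i hi
        interval_cases i
        · show (0:ℝ) < 1/2; norm_num
        · show (1/2:ℝ) < 1; norm_num
      · intro i hi
        interval_cases i
        · exact ⟨0, 0, by norm_num⟩
        · exact ⟨1, 1, by norm_num⟩
        · exact ⟨1, 0, by norm_num⟩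
      · intro i hi x hx
        interval_cases i
        · replace hx : x ∈ Icc (0:ℝ) (1/2) := hx
          have hx' : x ∈ Icc (1 - 2*EE 0) (1 - EE 0) := by
            rw [hE]; norm_num; exact hx
          rw [Fm_eq_Gm 0 ⟨hx.1, by linarith [hx.2]⟩, Gm_eq2 0 hx', hE]
          norm_num
          try ring
        · replace hx : x ∈ Icc (1/2:ℝ) 1 := hx
          have hx' : x ∈ Icc (1 - EE 0) 1 := by rw [hE]; norm_num; exact hx
          rw [Fm_eq_Gm 0 ⟨by linarith [hx.1], hx.2⟩, Gm_eq3 0 hx', hE]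
          norm_num
          try ring
    · -- M ≥ 1 : three pieces
      have he := EE_pos M
      have h2E : 2 * EE M ≤ 1/2 := by
        have : EE M ≤ (1/2:ℝ)^2 := by
          rw [EE]
          exact pow_le_pow_of_le_one (by norm_num) (by norm_num) (by omega)
        norm_num at this; linarith
      refine ⟨3,
        fun i => match i with | 0 => 0 | 1 => 1 - 2*EE M | 2 => 1 - EE M | _ => 1,
        fun i => match i with | 0 => -1 | 1 => 0 | _ => (M : ℤ),
        fun i => match i with | 0 => 1/2 | 1 => EE M | _ => 1 - 2^M * (1 - EE M),
        by norm_num, rfl, rfl, ?_, ?_, ?_⟩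
      · intro i hi
        interval_cases i
        · show (0:ℝ) < 1 - 2*EE M; linarith
        · show (1:ℝ) - 2*EE M < 1 - EE M; linarith
        · show (1:ℝ) - EE M < 1; linarith
      · intro i hi
        have hpow : ((2:ℕ):ℝ) = 2 := by norm_num
        interval_cases i
        · exact ⟨0, 0, by norm_num⟩
        · refine ⟨2^M - 1, M, ?_⟩
          show (1:ℝ) - 2*EE M = _
          have hne : ((2:ℝ))^M ≠ 0 := by positivity
          have h2 : 2 * EE M = ((1:ℝ)/2)^M := by rw [EE, pow_succ]; ring
          rw [hpow, h2]
          push_cast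
          field_simp
          rw [sub_mul, one_mul, ← mul_pow]; norm_num
        · refine ⟨2^(M+1) - 1, M+1, ?_⟩
          show (1:ℝ) - EE M = _
          have hne : ((2:ℝ))^(M+1) ≠ 0 := by positivity
          have h2 : EE M = ((1:ℝ)/2)^(M+1) := rfl
          rw [hpow, h2]
          push_cast
          field_simp
          rw [sub_mul, one_mul, ← mul_pow]; norm_num
        · exact ⟨1, 0, by norm_num⟩
      · intro i hi x hx
        have hpow : ((2:ℕ):ℝ) = 2 := by norm_num
        interval_cases i
        · replace hx : x ∈ Icc (0:ℝ) (1 - 2*EE M) := hx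
          have hx1 : x ∈ Icc (0:ℝ) 1 := ⟨hx.1, by linarith [hx.2]⟩
          rw [Fm_eq_Gm M hx1, Gm_eq1 M hx]
          show (x+1)/2 = ((2:ℕ):ℝ)^(-1:ℤ) * x + 1/2
          rw [hpow, zpow_neg, zpow_one]
          ring
        · replace hx : x ∈ Icc (1 - 2*EE M) (1 - EE M) := hx
          have hx1 : x ∈ Icc (0:ℝ) 1 := ⟨by linarith [hx.1], by linarith [hx.2]⟩
          rw [Fm_eq_Gm M hx1, Gm_eq2 M hx]
          show x + EE M = ((2:ℕ):ℝ)^(0:ℤ) * x + EE M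
          rw [hpow, zpow_zero]
          ring
        · replace hx : x ∈ Icc (1 - EE M) 1 := hx
          have hx1 : x ∈ Icc (0:ℝ) 1 := ⟨by linarith [hx.1], hx.2⟩
          rw [Fm_eq_Gm M hx1, Gm_eq3 M hx]
          show 1 + 2^M * (x - (1 - EE M)) = ((2:ℕ):ℝ)^((M:ℤ)) * x + (1 - 2^M * (1 - EE M))
          rw [hpow, zpow_natCast]
          ring

lemma fT_mem (M : ℕ) : InT 2 (fT M) :=
  ⟨fT_image M, Fm M, Fm_strictMono M, fT_lift M, piecewise_fT M⟩

lemma InT_one : InT 2 1 := by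
  constructor
  · have : ⇑(1 : Circle ≃ₜ Circle) = id := rfl
    rw [this, Set.image_id]
  · refine ⟨id, strictMono_id, fun x => rfl, fun x => rfl, 1, fun i => (i:ℝ), fun _ => 0,
      fun _ => 0, by norm_num, by norm_num, by norm_num, ?_, ?_, ?_⟩
    · intro i hi; interval_cases i; norm_num
    · intro i hi; exact ⟨i, 0, by norm_num⟩
    · intro i hi x hx; simp


/-- For every positive integer `m`, Thompson's group `T = T_2` contains
an element of order exactly `m`. -/
theorem T2_contains_all_orders (m : ℕ) (hm : 1 ≤ m) :
    ∃ f : Circle ≃ₜ Circle, f ∈ TnSet 2 ∧ orderOf f = m := by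
  rcases Nat.lt_or_ge m 2 with h | h
  · have hm1 : m = 1 := by omega
    subst hm1
    exact ⟨1, InT_one, orderOf_one⟩
  · refine ⟨fT (m - 2), fT_mem (m - 2), ?_⟩
    rw [orderOf_fT]
    omega

end ThompsonPaper
end
end
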